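/- arXiv:2407.05167 — 7 statements merged into one kernel-verified Lean document; each statement's English description precedes it below -/
import Mathlib

section
/- Let A be a commutative ring and f(u) = u^n + a_1 u^{n-1} + ... + a_n a monic polynomial over A. The splitting ring Split_A(f), defined as the quotient of A[ξ_1,...,ξ_n] by the relations identifying the coefficients of f(u) with those of (u-ξ_1)···(u-ξ_n), is a free A-module of rank n!. -/
/-!
STATEMENT 0: For a commutative ring `A` and a monic polynomial `f` of degree `n` over `A`,
the splitting ring `Split_A(f) = A[ξ₁,…,ξₙ] / (coefficients of f(u) - ∏ᵢ (u - ξᵢ))`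
is a free `A`-module of rank `n!`.
-/

universe u
open Polynomial

noncomputable def splitIdeal (n : ℕ) (A : Type u) [CommRing A] (f : A[X]) :
    Ideal (MvPolynomial (Fin n) A) :=
  Ideal.span { r : MvPolynomial (Fin n) A |
    ∃ k : ℕ, r = (f.map (algebraMap A (MvPolynomial (Fin n) A))).coeff k -
      ((∏ i : Fin n, (X - C (MvPolynomial.X i)) : Polynomial (MvPolynomial (Fin n) A))).coeff k }

lemma splitIdeal_map_eq (n : ℕ) (A : Type u) [CommRing A] (f : A[X]) :
    f.map (algebraMap A (MvPolynomial (Fin n) A ⧸ splitIdeal n A f)) =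
      ∏ i : Fin n, (X - C (Ideal.Quotient.mk (splitIdeal n A f) (MvPolynomial.X i))) := by
  have h1 : algebraMap A (MvPolynomial (Fin n) A ⧸ splitIdeal n A f) =
      (Ideal.Quotient.mk (splitIdeal n A f)).comp (algebraMap A (MvPolynomial (Fin n) A)) := by
    rw [IsScalarTower.algebraMap_eq A (MvPolynomial (Fin n) A), Ideal.Quotient.algebraMap_eq]
  have h2 : (∏ i : Fin n, (X - C (Ideal.Quotient.mk (splitIdeal n A f) (MvPolynomial.X i)))) =
      ((∏ i : Fin n, (X - C (MvPolynomial.X i)) : Polynomial (MvPolynomial (Fin n) A))).map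
        (Ideal.Quotient.mk (splitIdeal n A f)) := by
    rw [Polynomial.map_prod]; simp
  rw [h1, ← Polynomial.map_map, h2]
  ext k
  simp only [Polynomial.coeff_map]
  rw [← sub_eq_zero, ← map_sub, Ideal.Quotient.eq_zero_iff_mem]
  exact Ideal.subset_span ⟨k, by rw [Polynomial.coeff_map]⟩

set_option maxHeartbeats 2000000 in
theorem splitAux (n : ℕ) : ∀ (A : Type u) [CommRing A] (f : A[X]), f.Monic → f.natDegree = n →
    Nonempty (Module.Basis (Fin n.factorial) A
      (MvPolynomial (Fin n) A ⧸ splitIdeal n A f)) := by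
  induction n with
  | zero =>
    intro A _ f hf hdeg
    have hI : splitIdeal 0 A f = ⊥ := by
      rw [splitIdeal, Ideal.span_eq_bot]
      rintro _ ⟨k, rfl⟩
      have hf1 : f = 1 := hf.natDegree_eq_zero.mp hdeg
      simp [hf1]
    have hinj : Function.Injective (Ideal.Quotient.mkₐ A (splitIdeal 0 A f)) := by
      rw [RingHom.injective_iff_ker_eq_bot]
      show RingHom.ker (Ideal.Quotient.mk _) = ⊥
      rw [Ideal.mk_ker, hI]
    let e : MvPolynomial (Fin 0) A ≃ₐ[A] (MvPolynomial (Fin 0) A ⧸ splitIdeal 0 A f) :=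
      AlgEquiv.ofBijective (Ideal.Quotient.mkₐ A _) ⟨hinj, Ideal.Quotient.mkₐ_surjective A _⟩
    exact ⟨(Module.Basis.singleton (Fin 1) A).map
      ((MvPolynomial.isEmptyAlgEquiv A (Fin 0)).symm.toLinearEquiv ≪≫ₗ e.toLinearEquiv)⟩
  | succ n ih =>
    intro A _ f hf hdeg
    classical
    set B := AdjoinRoot f with hB
    set ρ : B := AdjoinRoot.root f with hρ
    have hroot : IsRoot (f.map (algebraMap A B)) ρ := by
      show eval ρ (f.map (algebraMap A B)) = 0
      rw [eval_map, AdjoinRoot.algebraMap_eq]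
      exact AdjoinRoot.eval₂_root f
    set f₁ : B[X] := f.map (algebraMap A B) /ₘ (X - C ρ) with hf₁def
    have hfB : (X - C ρ) * f₁ = f.map (algebraMap A B) :=
      mul_divByMonic_eq_iff_isRoot.mpr hroot
    have hf₁ : f₁.Monic := by
      apply Monic.of_mul_monic_left (monic_X_sub_C ρ)
      rw [hfB]; exact hf.map _
    have hA : Nontrivial A := by
      rcases subsingleton_or_nontrivial A with h | h
      · exfalso
        have : f.natDegree = 0 := by rw [Subsingleton.elim f 0]; simp
        omega
      · exact h
    have hBnt : Nontrivial B := by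
      set pb := AdjoinRoot.powerBasis' hf with hpb
      have h0 : 0 < pb.dim := by
        rw [hpb, AdjoinRoot.powerBasis'_dim, hdeg]; omega
      exact nontrivial_of_ne (pb.basis ⟨0, h0⟩) 0 (pb.basis.ne_zero _)
    have hdeg₁ : f₁.natDegree = n := by
      have h := congrArg natDegree hfB
      rw [(monic_X_sub_C ρ).natDegree_mul hf₁, natDegree_X_sub_C,
        hf.natDegree_map, hdeg] at h
      omega
    obtain ⟨b₁⟩ := ih B f₁ hf₁ hdeg₁
    -- notation
    set T := MvPolynomial (Fin (n + 1)) A with hT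
    set I : Ideal T := splitIdeal (n + 1) A f with hI
    set S := MvPolynomial (Fin n) B with hS
    set I₁ : Ideal S := splitIdeal n B f₁ with hI₁
    set mk : T →+* T ⧸ I := Ideal.Quotient.mk I with hmk
    set mk₁ : S →+* S ⧸ I₁ := Ideal.Quotient.mk I₁ with hmk₁
    -- f has ξ₀ as a root in the quotient
    have hev : Polynomial.aeval (mk (MvPolynomial.X 0)) f = 0 := by
      rw [Polynomial.aeval_def, ← eval_map, splitIdeal_map_eq, eval_prod]
      apply Finset.prod_eq_zero (Finset.mem_univ (0 : Fin (n + 1)))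
      simp
      exact sub_self _
    set β : B →ₐ[A] T ⧸ I := AdjoinRoot.liftAlgHom f (Algebra.ofId A (T ⧸ I)) (mk (MvPolynomial.X 0)) hev with hβ
    have hβρ : β ρ = mk (MvPolynomial.X 0) := by
      rw [hβ, hρ]; exact AdjoinRoot.liftAlgHom_root f _ _ hev
    have hβρ' : (β : B →+* T ⧸ I) ρ = mk (MvPolynomial.X 0) := hβρ
    -- the map χ : S → T ⧸ I
    set χ₀ : S →+* T ⧸ I :=
      MvPolynomial.eval₂Hom (β : B →+* T ⧸ I) (fun j => mk (MvPolynomial.X j.succ)) with hχ₀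
    have hχ₀C : ∀ b : B, χ₀ (MvPolynomial.C b) = β b := fun b => MvPolynomial.eval₂_C _ _ _
    set χ : S →ₐ[A] T ⧸ I :=
      { χ₀ with
        commutes' := fun a => by
          show χ₀ (algebraMap A S a) = _
          rw [show (algebraMap A S a) = MvPolynomial.C (algebraMap A B a) from rfl, hχ₀C]
          exact β.commutes a } with hχ
    have hχC : ∀ b : B, χ (MvPolynomial.C b) = β b := hχ₀C
    have hχX : ∀ j : Fin n, χ (MvPolynomial.X j) = mk (MvPolynomial.X j.succ) :=
      fun j => MvPolynomial.eval₂_X _ _ _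
    -- key identity in (T ⧸ I)[X]
    have key : f.map (algebraMap A (T ⧸ I)) =
        (X - C (mk (MvPolynomial.X 0))) *
          ∏ j : Fin n, (X - C (mk (MvPolynomial.X j.succ))) := by
      rw [splitIdeal_map_eq, Fin.prod_univ_succ]
    have hL4 : f₁.map (β : B →+* T ⧸ I) =
        ∏ j : Fin n, (X - C (mk (MvPolynomial.X j.succ))) := by
      apply (monic_X_sub_C (mk (MvPolynomial.X (0 : Fin (n + 1))))).isRegular.left
      show (X - C (mk (MvPolynomial.X 0))) * _ = (X - C (mk (MvPolynomial.X 0))) * _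
      calc (X - C (mk (MvPolynomial.X 0))) * f₁.map (β : B →+* T ⧸ I)
          = ((X - C ρ) * f₁).map (β : B →+* T ⧸ I) := by
            rw [Polynomial.map_mul, Polynomial.map_sub, map_X, map_C, hβρ']
        _ = (f.map (algebraMap A B)).map (β : B →+* T ⧸ I) := by rw [hfB]
        _ = f.map (algebraMap A (T ⧸ I)) := by
            rw [Polynomial.map_map, AlgHom.comp_algebraMap]
        _ = _ := key
    -- χ kills I₁
    have hker₁ : ∀ a ∈ I₁, χ a = 0 := by
      have hle : I₁ ≤ RingHom.ker (χ : S →+* T ⧸ I) := by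
        rw [hI₁, splitIdeal, Ideal.span_le]
        rintro _ ⟨k, rfl⟩
        simp only [SetLike.mem_coe, RingHom.mem_ker]
        show χ _ = 0
        rw [map_sub]
        have e1 : χ ((f₁.map (algebraMap B S)).coeff k) = (f₁.map (β : B →+* T ⧸ I)).coeff k := by
          rw [Polynomial.coeff_map, Polynomial.coeff_map]
          exact hχC _
        have e2 : χ (((∏ j : Fin n, (X - C (MvPolynomial.X j)) : S[X])).coeff k) =
            (∏ j : Fin n, (X - C (mk (MvPolynomial.X j.succ))) : (T ⧸ I)[X]).coeff k := by
          rw [show χ (((∏ j : Fin n, (X - C (MvPolynomial.X j)) : S[X])).coeff k) =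
              (((∏ j : Fin n, (X - C (MvPolynomial.X j)) : S[X])).map (χ : S →+* T ⧸ I)).coeff k
            from (Polynomial.coeff_map _ _).symm]
          congr 1
          rw [Polynomial.map_prod]
          refine Finset.prod_congr rfl fun j _ => ?_
          rw [Polynomial.map_sub, map_X, map_C]
          exact congrArg (fun z => X - C z) (hχX j)
        rw [e1, e2, hL4, sub_self]
      exact fun a ha => hle ha
    set Ψ : (S ⧸ I₁) →ₐ[A] (T ⧸ I) := Ideal.Quotient.liftₐ I₁ χ hker₁ with hΨ
    have hΨmk : ∀ s : S, Ψ (mk₁ s) = χ s := fun s => Ideal.Quotient.liftₐ_apply _ _ _ _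
    -- the map ψ : T → S ⧸ I₁
    set v : Fin (n + 1) → S ⧸ I₁ :=
      fun i => Fin.cases (mk₁ (MvPolynomial.C ρ)) (fun j => mk₁ (MvPolynomial.X j)) i with hv
    set ψ : T →ₐ[A] S ⧸ I₁ := MvPolynomial.aeval v with hψ
    have hψ0 : ψ (MvPolynomial.X 0) = mk₁ (MvPolynomial.C ρ) := by
      rw [hψ, MvPolynomial.aeval_X, hv]
      simp
    have hψs : ∀ j : Fin n, ψ (MvPolynomial.X j.succ) = mk₁ (MvPolynomial.X j) := by
      intro j; rw [hψ, MvPolynomial.aeval_X, hv]; exact Fin.cases_succ j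
    have hBQ : algebraMap B (S ⧸ I₁) = mk₁.comp (MvPolynomial.C : B →+* S) := by
      rw [IsScalarTower.algebraMap_eq B S (S ⧸ I₁), Ideal.Quotient.algebraMap_eq]
      rfl
    have key₁ : f₁.map (algebraMap B (S ⧸ I₁)) =
        ∏ j : Fin n, (X - C (mk₁ (MvPolynomial.X j))) := splitIdeal_map_eq n B f₁
    have keyT : f.map (algebraMap A (S ⧸ I₁)) =
        (X - C (mk₁ (MvPolynomial.C ρ))) * ∏ j : Fin n, (X - C (mk₁ (MvPolynomial.X j))) := by
      rw [IsScalarTower.algebraMap_eq A B (S ⧸ I₁), ← Polynomial.map_map, ← hfB,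
        Polynomial.map_mul, Polynomial.map_sub, map_X, map_C, key₁, hBQ]
      rfl
    have hkerψ : ∀ a ∈ I, ψ a = 0 := by
      have hle : I ≤ RingHom.ker (ψ : T →+* S ⧸ I₁) := by
        rw [hI, splitIdeal, Ideal.span_le]
        rintro _ ⟨k, rfl⟩
        simp only [SetLike.mem_coe, RingHom.mem_ker]
        show ψ _ = 0
        rw [map_sub]
        have e1 : ψ ((f.map (algebraMap A T)).coeff k) =
            (f.map (algebraMap A (S ⧸ I₁))).coeff k := by
          rw [Polynomial.coeff_map, Polynomial.coeff_map]
          exact ψ.commutes _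
        have e2 : ψ (((∏ i : Fin (n + 1), (X - C (MvPolynomial.X i)) : T[X])).coeff k) =
            ((X - C (mk₁ (MvPolynomial.C ρ))) *
              ∏ j : Fin n, (X - C (mk₁ (MvPolynomial.X j))) : (S ⧸ I₁)[X]).coeff k := by
          rw [show ψ (((∏ i : Fin (n + 1), (X - C (MvPolynomial.X i)) : T[X])).coeff k) =
              (((∏ i : Fin (n + 1), (X - C (MvPolynomial.X i)) : T[X])).map
                (ψ : T →+* S ⧸ I₁)).coeff k
            from (Polynomial.coeff_map _ _).symm]
          congr 1
          rw [Polynomial.map_prod, Fin.prod_univ_succ]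
          congr 1
          · rw [Polynomial.map_sub, map_X, map_C]
            exact congrArg (fun z => X - C z) hψ0
          · refine Finset.prod_congr rfl fun j _ => ?_
            rw [Polynomial.map_sub, map_X, map_C]
            exact congrArg (fun z => X - C z) (hψs j)
        rw [e1, e2, ← keyT, sub_self]
      exact fun a ha => hle ha
    set Φ : (T ⧸ I) →ₐ[A] (S ⧸ I₁) := Ideal.Quotient.liftₐ I ψ hkerψ with hΦ
    have hΦmk : ∀ t : T, Φ (mk t) = ψ t := fun t => Ideal.Quotient.liftₐ_apply _ _ _ _
    -- Φ ∘ β = mk₁ ∘ C  (on B)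
    have hΦβ : ∀ b : B, Φ (β b) = mk₁ (MvPolynomial.C b) := by
      have : Φ.comp β = (Ideal.Quotient.mkₐ A I₁).comp (IsScalarTower.toAlgHom A B S) := by
        apply AdjoinRoot.algHom_ext
        show Φ (β ρ) = mk₁ (algebraMap B S ρ)
        rw [hβρ, hΦmk, hψ0]
        rfl
      intro b
      have := congrArg (fun (g : B →ₐ[A] S ⧸ I₁) => g b) this
      simpa [hBQ] using this
    -- mutual inverses
    have hΦΨ : ∀ x, Φ (Ψ x) = x := by
      have hhom : (Φ : T ⧸ I →+* S ⧸ I₁).comp ((Ψ : (S ⧸ I₁) →+* T ⧸ I).comp mk₁) = mk₁ := by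
        apply MvPolynomial.ringHom_ext
        · intro b
          show Φ (Ψ (mk₁ (MvPolynomial.C b))) = mk₁ (MvPolynomial.C b)
          rw [hΨmk, hχC, hΦβ]
        · intro j
          show Φ (Ψ (mk₁ (MvPolynomial.X j))) = mk₁ (MvPolynomial.X j)
          rw [hΨmk, hχX, hΦmk, hψs]
      intro x
      obtain ⟨s, rfl⟩ := Ideal.Quotient.mk_surjective (I := I₁) x
      exact congrArg (fun (g : S →+* S ⧸ I₁) => g s) hhom
    have hΨΦ : ∀ x, Ψ (Φ x) = x := by
      have hhom : (Ψ.comp Φ).comp (Ideal.Quotient.mkₐ A I) = Ideal.Quotient.mkₐ A I := by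
        apply MvPolynomial.algHom_ext
        intro i
        show Ψ (Φ (mk (MvPolynomial.X i))) = mk (MvPolynomial.X i)
        induction i using Fin.cases with
        | zero => rw [hΦmk, hψ0, hΨmk, hχC, hβρ]
        | succ j => rw [hΦmk, hψs, hΨmk, hχX]
      intro x
      obtain ⟨t, rfl⟩ := Ideal.Quotient.mk_surjective (I := I) x
      exact congrArg (fun (g : T →ₐ[A] T ⧸ I) => g t) hhom
    set E : (S ⧸ I₁) ≃ₐ[A] (T ⧸ I) :=
      AlgEquiv.ofAlgHom Ψ Φ (AlgHom.ext hΨΦ) (AlgHom.ext hΦΨ) with hE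
    -- assemble the basis
    have bB : Module.Basis (Fin (n + 1)) A B :=
      (AdjoinRoot.powerBasis' hf).basis.reindex
        (finCongr (by rw [AdjoinRoot.powerBasis'_dim, hdeg]))
    have b₂ : Module.Basis (Fin (n + 1) × Fin n.factorial) A (S ⧸ I₁) := bB.smulTower b₁
    exact ⟨(b₂.map E.toLinearEquiv).reindex
      (finProdFinEquiv.trans (finCongr (Nat.factorial_succ n).symm))⟩

theorem splitting_ring_free_of_rank_factorial
    (A : Type*) [CommRing A] (n : ℕ) (f : Polynomial A)
    (hf : f.Monic) (hdeg : f.natDegree = n) :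
    let R := MvPolynomial (Fin n) A
    let g : Polynomial R := ∏ i : Fin n, (Polynomial.X - Polynomial.C (MvPolynomial.X i))
    let I : Ideal R := Ideal.span
      { r : R | ∃ k : ℕ, r = (f.map (algebraMap A R)).coeff k - g.coeff k }
    Nonempty (Module.Basis (Fin (Nat.factorial n)) A (R ⧸ I)) := by
  intro R g I
  exact splitAux n A f hf hdeg
end

section
/- Let A be a commutative Q-algebra, f a monic polynomial of degree n over A, and C = Fact^d_A(f) the d-factorization ring with universal factors g_1,...,g_r. Then there is a natural isomorphism of A-modules Split_A(f) ≅ Split_C(g_1) ⊗_C ··· ⊗_C Split_C(g_r). -/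
/-!
STATEMENT 2: For a commutative ℚ-algebra `A`, a monic polynomial `f` of degree `n` over `A`,
and `C = Fact^d_A(f)` the `d`-factorization ring with universal monic factors `g₁,…,g_r`,
there is an isomorphism of `A`-modules
`Split_A(f) ≅ Split_C(g₁) ⊗_C ⋯ ⊗_C Split_C(g_r)`.
-/

/-- The product `(u-ξ₁)⋯(u-ξ_k)` over the polynomial ring `B[ξ₁,…,ξ_k]`. -/
noncomputable def univSplitPoly (B : Type*) [CommRing B] (k : ℕ) :
    Polynomial (MvPolynomial (Fin k) B) :=
  ∏ i : Fin k, (Polynomial.X - Polynomial.C (MvPolynomial.X i))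

/-- The splitting ring of a polynomial `p` over `B`, with `k` universal roots `ξ₁,…,ξ_k`:
the quotient of `B[ξ₁,…,ξ_k]` identifying the coefficients of `p(u)` with those of
`(u-ξ₁)⋯(u-ξ_k)`. -/
def SplitRing (B : Type*) [CommRing B] (k : ℕ) (p : Polynomial B) : Type _ :=
  MvPolynomial (Fin k) B ⧸ (Ideal.span
    { x : MvPolynomial (Fin k) B | ∃ m : ℕ,
        x = (p.map (algebraMap B (MvPolynomial (Fin k) B))).coeff m -
          (univSplitPoly B k).coeff m })

noncomputable instance (B : Type*) [CommRing B] (k : ℕ) (p : Polynomial B) :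
    CommRing (SplitRing B k p) :=
  inferInstanceAs (CommRing (_ ⧸ _))

noncomputable instance (B : Type*) [CommRing B] (k : ℕ) (p : Polynomial B) :
    Algebra B (SplitRing B k p) :=
  inferInstanceAs (Algebra B (_ ⧸ _))

/-- The generic monic polynomial `gᵢ = u^{dᵢ} + Σ_j b_{i,j} u^j` of degree `dᵢ`, over the
polynomial ring `B[b_{i,j}]`. -/
noncomputable def genericFactor (B : Type*) [CommRing B] {r : ℕ} (d : Fin r → ℕ) (i : Fin r) :
    Polynomial (MvPolynomial ((i : Fin r) × Fin (d i)) B) :=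
  Polynomial.X ^ (d i) +
    ∑ j : Fin (d i), Polynomial.C (MvPolynomial.X (Sigma.mk i j)) * Polynomial.X ^ (j : ℕ)

/-- The `d`-factorization ring of `p` over `B`: the quotient of the polynomial ring on
variables `b_{i,j}` (`1 ≤ i ≤ r`, `1 ≤ j ≤ dᵢ`) identifying the coefficients of `p` with
those of the product of the generic monic polynomials `gᵢ` of degree `dᵢ`. -/
def FactRing (B : Type*) [CommRing B] {r : ℕ} (d : Fin r → ℕ) (p : Polynomial B) : Type _ :=
  MvPolynomial ((i : Fin r) × Fin (d i)) B ⧸ (Ideal.span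
    { x : MvPolynomial ((i : Fin r) × Fin (d i)) B | ∃ m : ℕ,
        x = (p.map (algebraMap B (MvPolynomial ((i : Fin r) × Fin (d i)) B))).coeff m -
          (∏ i : Fin r, genericFactor B d i).coeff m })

noncomputable instance (B : Type*) [CommRing B] {r : ℕ} (d : Fin r → ℕ) (p : Polynomial B) :
    CommRing (FactRing B d p) :=
  inferInstanceAs (CommRing (_ ⧸ _))

noncomputable instance (B : Type*) [CommRing B] {r : ℕ} (d : Fin r → ℕ) (p : Polynomial B) :
    Algebra B (FactRing B d p) :=
  inferInstanceAs (Algebra B (_ ⧸ _))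

/-- The universal `i`-th monic factor `gᵢ` of `p`, viewed in the factorization ring. -/
noncomputable def FactRing.univFactor (B : Type*) [CommRing B] {r : ℕ} (d : Fin r → ℕ)
    (p : Polynomial B) (i : Fin r) : Polynomial (FactRing B d p) :=
  (genericFactor B d i).map (Ideal.Quotient.mk _)

open Polynomial

section SplitAux

variable (B : Type*) [CommRing B] (k : ℕ) (p : Polynomial B)

/-- The universal roots in the splitting ring. -/
noncomputable def splitRoot (i : Fin k) : SplitRing B k p :=
  Ideal.Quotient.mk _ (MvPolynomial.X i)

theorem splitRing_map_eq :
    p.map (algebraMap B (SplitRing B k p)) =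
      ∏ i : Fin k, (X - C (splitRoot B k p i)) := by
  have h1 : p.map (algebraMap B (SplitRing B k p)) =
      (p.map (algebraMap B (MvPolynomial (Fin k) B))).map (Ideal.Quotient.mk _) := by
    rw [Polynomial.map_map]; rfl
  have h2 : (∏ i : Fin k, (X - C (splitRoot B k p i))) =
      (univSplitPoly B k).map (Ideal.Quotient.mk _) := by
    simp only [univSplitPoly, Polynomial.map_prod, Polynomial.map_sub,
      Polynomial.map_X, Polynomial.map_C, splitRoot]
    erw [Polynomial.map_prod]; simp only [Polynomial.map_sub, Polynomial.map_X, Polynomial.map_C]; rfl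
  erw [h1, h2]
  ext m
  simp only [Polynomial.coeff_map]
  rw [← sub_eq_zero, ← map_sub, Ideal.Quotient.eq_zero_iff_mem]
  exact Ideal.subset_span ⟨m, by rw [Polynomial.coeff_map]⟩

variable {R : Type*} [CommRing R] [Algebra B R]

/-- Universal property of the splitting ring. -/
noncomputable def splitLift (x : Fin k → R)
    (hx : p.map (algebraMap B R) = ∏ i : Fin k, (X - C (x i))) :
    SplitRing B k p →ₐ[B] R :=
  Ideal.Quotient.liftₐ _ (MvPolynomial.aeval x) (fun a ha => by
    have hker : Ideal.span
        { y : MvPolynomial (Fin k) B | ∃ m : ℕ,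
          y = (p.map (algebraMap B (MvPolynomial (Fin k) B))).coeff m -
            (univSplitPoly B k).coeff m } ≤
        RingHom.ker (MvPolynomial.aeval x : MvPolynomial (Fin k) B →ₐ[B] R).toRingHom := by
      rw [Ideal.span_le]
      rintro _ ⟨m, rfl⟩
      have key : (p.map (algebraMap B (MvPolynomial (Fin k) B))).map
          (MvPolynomial.aeval x : MvPolynomial (Fin k) B →ₐ[B] R).toRingHom
          = p.map (algebraMap B R) := by
        rw [Polynomial.map_map]; congr 1; ext b; simp
      have key2 : (univSplitPoly B k).map
          (MvPolynomial.aeval x : MvPolynomial (Fin k) B →ₐ[B] R).toRingHom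
          = ∏ i : Fin k, (X - C (x i)) := by
        simp [univSplitPoly, Polynomial.map_prod]
      have : MvPolynomial.aeval x
          ((p.map (algebraMap B (MvPolynomial (Fin k) B))).coeff m -
            (univSplitPoly B k).coeff m) = 0 := by
        rw [map_sub]
        rw [show (MvPolynomial.aeval x)
            ((p.map (algebraMap B (MvPolynomial (Fin k) B))).coeff m)
            = ((p.map (algebraMap B (MvPolynomial (Fin k) B))).map
              (MvPolynomial.aeval x : MvPolynomial (Fin k) B →ₐ[B] R).toRingHom).coeff m
          from (Polynomial.coeff_map _ m).symm]
        rw [show (MvPolynomial.aeval x) ((univSplitPoly B k).coeff m)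
            = ((univSplitPoly B k).map
              (MvPolynomial.aeval x : MvPolynomial (Fin k) B →ₐ[B] R).toRingHom).coeff m
          from (Polynomial.coeff_map _ m).symm]
        rw [key, key2, hx, sub_self]
      exact this
    exact hker ha)

@[simp] theorem splitLift_root (x : Fin k → R)
    (hx : p.map (algebraMap B R) = ∏ i : Fin k, (X - C (x i))) (i : Fin k) :
    splitLift B k p x hx (splitRoot B k p i) = x i := by
  show Ideal.Quotient.liftₐ _ _ _ (Ideal.Quotient.mk _ (MvPolynomial.X i)) = x i
  erw [Ideal.Quotient.liftₐ_apply, Ideal.Quotient.lift_mk]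
  simp

theorem splitRing_hom_ext {φ ψ : SplitRing B k p →ₐ[B] R}
    (h : ∀ i, φ (splitRoot B k p i) = ψ (splitRoot B k p i)) : φ = ψ := by
  have key : φ.comp (Ideal.Quotient.mkₐ B _) = ψ.comp (Ideal.Quotient.mkₐ B _) :=
    MvPolynomial.algHom_ext (fun i => h i)
  ext y
  obtain ⟨z, rfl⟩ := Ideal.Quotient.mk_surjective y
  exact DFunLike.congr_fun key z

end SplitAux
section FactAux

variable (B : Type*) [CommRing B] {r : ℕ} (d : Fin r → ℕ) (p : Polynomial B)

/-- The universal coefficients in the factorization ring. -/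
noncomputable def factCoeff (s : (i : Fin r) × Fin (d i)) : FactRing B d p :=
  Ideal.Quotient.mk _ (MvPolynomial.X s)

theorem factRing_map_eq :
    p.map (algebraMap B (FactRing B d p)) = ∏ i : Fin r, FactRing.univFactor B d p i := by
  have h1 : p.map (algebraMap B (FactRing B d p)) =
      (p.map (algebraMap B (MvPolynomial ((i : Fin r) × Fin (d i)) B))).map
        (Ideal.Quotient.mk _) := by
    rw [Polynomial.map_map]; rfl
  have h2 : ∏ i : Fin r, FactRing.univFactor B d p i =
      (∏ i : Fin r, genericFactor B d i).map (Ideal.Quotient.mk _) := by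
    rw [Polynomial.map_prod]; rfl
  rw [h1, h2]
  ext m
  simp only [Polynomial.coeff_map]
  rw [← sub_eq_zero, ← map_sub, Ideal.Quotient.eq_zero_iff_mem]
  exact Ideal.subset_span ⟨m, by rw [Polynomial.coeff_map]⟩

variable {R : Type*} [CommRing R] [Algebra B R]

theorem genericFactor_map_aeval (b : ((i : Fin r) × Fin (d i)) → R) (i : Fin r) :
    (genericFactor B d i).map
        (MvPolynomial.aeval b : MvPolynomial ((i : Fin r) × Fin (d i)) B →ₐ[B] R).toRingHom =
      X ^ (d i) + ∑ j : Fin (d i), C (b ⟨i, j⟩) * X ^ (j : ℕ) := by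
  simp [genericFactor, Polynomial.map_add, Polynomial.map_pow, Polynomial.map_sum,
    Polynomial.map_mul]

/-- Universal property of the factorization ring. -/
noncomputable def factLift (b : ((i : Fin r) × Fin (d i)) → R)
    (hb : p.map (algebraMap B R) =
      ∏ i : Fin r, (X ^ (d i) + ∑ j : Fin (d i), C (b ⟨i, j⟩) * X ^ (j : ℕ))) :
    FactRing B d p →ₐ[B] R :=
  Ideal.Quotient.liftₐ _ (MvPolynomial.aeval b) (fun a ha => by
    have hker : Ideal.span
        { x : MvPolynomial ((i : Fin r) × Fin (d i)) B | ∃ m : ℕ,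
          x = (p.map (algebraMap B (MvPolynomial ((i : Fin r) × Fin (d i)) B))).coeff m -
            (∏ i : Fin r, genericFactor B d i).coeff m } ≤
        RingHom.ker (MvPolynomial.aeval b :
          MvPolynomial ((i : Fin r) × Fin (d i)) B →ₐ[B] R).toRingHom := by
      rw [Ideal.span_le]
      rintro _ ⟨m, rfl⟩
      have key : (p.map (algebraMap B (MvPolynomial ((i : Fin r) × Fin (d i)) B))).map
          (MvPolynomial.aeval b :
            MvPolynomial ((i : Fin r) × Fin (d i)) B →ₐ[B] R).toRingHom
          = p.map (algebraMap B R) := by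
        rw [Polynomial.map_map]; congr 1; ext c; simp
      have key2 : (∏ i : Fin r, genericFactor B d i).map
          (MvPolynomial.aeval b :
            MvPolynomial ((i : Fin r) × Fin (d i)) B →ₐ[B] R).toRingHom
          = ∏ i : Fin r, (X ^ (d i) + ∑ j : Fin (d i), C (b ⟨i, j⟩) * X ^ (j : ℕ)) := by
        rw [Polynomial.map_prod]
        exact Finset.prod_congr rfl fun i _ => genericFactor_map_aeval B d b i
      show MvPolynomial.aeval b _ = 0
      rw [map_sub,
        show (MvPolynomial.aeval b)
            ((p.map (algebraMap B (MvPolynomial ((i : Fin r) × Fin (d i)) B))).coeff m)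
          = ((p.map (algebraMap B (MvPolynomial ((i : Fin r) × Fin (d i)) B))).map
            (MvPolynomial.aeval b :
              MvPolynomial ((i : Fin r) × Fin (d i)) B →ₐ[B] R).toRingHom).coeff m
          from (Polynomial.coeff_map _ m).symm,
        show (MvPolynomial.aeval b) ((∏ i : Fin r, genericFactor B d i).coeff m)
          = ((∏ i : Fin r, genericFactor B d i).map
            (MvPolynomial.aeval b :
              MvPolynomial ((i : Fin r) × Fin (d i)) B →ₐ[B] R).toRingHom).coeff m
          from (Polynomial.coeff_map _ m).symm,
        key, key2, hb, sub_self]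
    exact hker ha)

@[simp] theorem factLift_coeff (b : ((i : Fin r) × Fin (d i)) → R)
    (hb : p.map (algebraMap B R) =
      ∏ i : Fin r, (X ^ (d i) + ∑ j : Fin (d i), C (b ⟨i, j⟩) * X ^ (j : ℕ)))
    (s : (i : Fin r) × Fin (d i)) :
    factLift B d p b hb (factCoeff B d p s) = b s := by
  show Ideal.Quotient.liftₐ _ _ _ (Ideal.Quotient.mk _ (MvPolynomial.X s)) = b s
  erw [Ideal.Quotient.liftₐ_apply, Ideal.Quotient.lift_mk]
  simp

theorem factLift_mk (b : ((i : Fin r) × Fin (d i)) → R)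
    (hb : p.map (algebraMap B R) =
      ∏ i : Fin r, (X ^ (d i) + ∑ j : Fin (d i), C (b ⟨i, j⟩) * X ^ (j : ℕ)))
    (a : MvPolynomial ((i : Fin r) × Fin (d i)) B) :
    factLift B d p b hb (Ideal.Quotient.mk _ a) = MvPolynomial.aeval b a := by
  show Ideal.Quotient.liftₐ _ _ _ (Ideal.Quotient.mk _ a) = _
  erw [Ideal.Quotient.liftₐ_apply, Ideal.Quotient.lift_mk]

theorem univFactor_map_factLift (b : ((i : Fin r) × Fin (d i)) → R)
    (hb : p.map (algebraMap B R) =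
      ∏ i : Fin r, (X ^ (d i) + ∑ j : Fin (d i), C (b ⟨i, j⟩) * X ^ (j : ℕ)))
    (i : Fin r) :
    (FactRing.univFactor B d p i).map (factLift B d p b hb : FactRing B d p →+* R) =
      X ^ (d i) + ∑ j : Fin (d i), C (b ⟨i, j⟩) * X ^ (j : ℕ) := by
  erw [FactRing.univFactor, Polynomial.map_map, ← genericFactor_map_aeval B d b i]
  congr 1

theorem factRing_hom_ext {φ ψ : FactRing B d p →ₐ[B] R}
    (h : ∀ s, φ (factCoeff B d p s) = ψ (factCoeff B d p s)) : φ = ψ := by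
  have key : φ.comp (Ideal.Quotient.mkₐ B _) = ψ.comp (Ideal.Quotient.mkₐ B _) :=
    MvPolynomial.algHom_ext (fun s => h s)
  ext y
  obtain ⟨z, rfl⟩ := Ideal.Quotient.mk_surjective y
  exact DFunLike.congr_fun key z

theorem genericFactor_coeff (i : Fin r) (j : Fin (d i)) :
    (genericFactor B d i).coeff (j : ℕ) = MvPolynomial.X ⟨i, j⟩ := by
  rw [genericFactor]
  rw [Polynomial.coeff_add, Polynomial.coeff_X_pow, if_neg (Nat.ne_of_lt j.isLt),
    Polynomial.finset_sum_coeff]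
  rw [Finset.sum_eq_single j]
  · simp
  · intro j' _ hj'
    rw [Polynomial.coeff_C_mul, Polynomial.coeff_X_pow,
      if_neg (fun hc => hj' (Fin.ext hc.symm)), mul_zero]
  · simp

end FactAux
section MonicAux

variable {R : Type*} [CommRing R]

theorem monic_eq_X_pow_add_sum {q : Polynomial R} (hq : q.Monic) {m : ℕ}
    (hm : q.natDegree = m) :
    q = X ^ m + ∑ j : Fin m, C (q.coeff (j : ℕ)) * X ^ (j : ℕ) := by
  rw [Fin.sum_univ_eq_sum_range (fun j => C (q.coeff j) * X ^ j)]
  conv_lhs => rw [hq.as_sum]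
  rw [hm]

theorem prod_X_sub_C_eq_sum {k : ℕ} (x : Fin k → R) :
    ∏ i : Fin k, (X - C (x i)) =
      X ^ k + ∑ j : Fin k, C ((∏ i : Fin k, (X - C (x i))).coeff (j : ℕ)) * X ^ (j : ℕ) := by
  rcases subsingleton_or_nontrivial R with h | h
  · exact Subsingleton.elim _ _
  · refine monic_eq_X_pow_add_sum (monic_prod_of_monic _ _ fun i _ => monic_X_sub_C _) ?_
    rw [Polynomial.natDegree_prod_of_monic _ _ fun i _ => monic_X_sub_C _]
    simp [Polynomial.natDegree_X_sub_C]

end MonicAux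
section TensorAux

open scoped TensorProduct

/-- The algebra homomorphism out of a finite tensor product of commutative algebras induced by a
compatible family of algebra homomorphisms. -/
noncomputable def piProdAlgHom {R : Type*} [CommSemiring R] {ι : Type*} [Fintype ι]
    {A : ι → Type*} [∀ i, CommSemiring (A i)] [∀ i, Algebra R (A i)]
    {S : Type*} [CommSemiring S] [Algebra R S] (ψ : ∀ i, A i →ₐ[R] S) :
    PiTensorProduct R A →ₐ[R] S :=
  PiTensorProduct.liftAlgHom ((MultilinearMap.mkPiAlgebra R ι S).compLinearMap
    (fun i => (ψ i).toLinearMap)) (by simp) (fun x y => by simp [Finset.prod_mul_distrib])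

@[simp] lemma piProdAlgHom_tprod {R : Type*} [CommSemiring R] {ι : Type*} [Fintype ι]
    {A : ι → Type*} [∀ i, CommSemiring (A i)] [∀ i, Algebra R (A i)]
    {S : Type*} [CommSemiring S] [Algebra R S] (ψ : ∀ i, A i →ₐ[R] S) (x : ∀ i, A i) :
    piProdAlgHom ψ (PiTensorProduct.tprod R x) = ∏ i, ψ i (x i) := by
  unfold piProdAlgHom
  erw [PiTensorProduct.liftAlgHom_apply]
  simp

@[simp] lemma piProdAlgHom_single {R : Type*} [CommSemiring R] {ι : Type*} [Fintype ι]
    [DecidableEq ι] {A : ι → Type*} [∀ i, CommSemiring (A i)] [∀ i, Algebra R (A i)]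
    {S : Type*} [CommSemiring S] [Algebra R S] (ψ : ∀ i, A i →ₐ[R] S) (i : ι) (y : A i) :
    piProdAlgHom ψ (PiTensorProduct.singleAlgHom i y) = ψ i y := by
  rw [PiTensorProduct.singleAlgHom_apply, piProdAlgHom_tprod]
  rw [Fintype.prod_eq_single i (fun j hj => by
    simp only [MonoidHom.mulSingle_apply, Pi.mulSingle_eq_of_ne hj, map_one])]
  simp

end TensorAux
set_option maxHeartbeats 2000000 in
theorem splitting_ring_iso_piTensor_of_factorization
    (A : Type*) [CommRing A] [Algebra ℚ A] (n r : ℕ) (d : Fin r → ℕ) (hd : ∑ i, d i = n)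
    (f : Polynomial A) (hf : f.Monic) (hdeg : f.natDegree = n) :
    letI C := FactRing A d f
    letI T := PiTensorProduct C (fun i : Fin r => SplitRing C (d i) (FactRing.univFactor A d f i))
    letI : Module A T := Module.compHom T (algebraMap A C)
    Nonempty (SplitRing A n f ≃ₗ[A] T) := by
  classical
  -- an arbitrary identification of `Fin n` with the disjoint union of the `Fin (d i)`
  let e : Fin n ≃ ((i : Fin r) × Fin (d i)) :=
    Fintype.equivOfCardEq (by simp [Fintype.card_sigma, hd])
  -- the inclusion of the `i`-th factor into the tensor product
  let ι : (i : Fin r) →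
      SplitRing (FactRing A d f) (d i) (FactRing.univFactor A d f i) →ₐ[FactRing A d f]
        PiTensorProduct (FactRing A d f)
          (fun i : Fin r => SplitRing (FactRing A d f) (d i) (FactRing.univFactor A d f i)) :=
    fun i => PiTensorProduct.singleAlgHom
      (R := FactRing A d f)
      (A := fun i : Fin r => SplitRing (FactRing A d f) (d i) (FactRing.univFactor A d f i)) i
  letI : Algebra A (PiTensorProduct (FactRing A d f)
      (fun i : Fin r => SplitRing (FactRing A d f) (d i) (FactRing.univFactor A d f i))) :=
    ((algebraMap (FactRing A d f) _).comp (algebraMap A (FactRing A d f))).toAlgebra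
  -- the universal roots in the tensor product
  let F : ((i : Fin r) × Fin (d i)) → PiTensorProduct (FactRing A d f)
      (fun i : Fin r => SplitRing (FactRing A d f) (d i) (FactRing.univFactor A d f i)) :=
    fun s => ι s.1 (splitRoot (FactRing A d f) (d s.1) (FactRing.univFactor A d f s.1) s.2)
  let t : Fin n → PiTensorProduct (FactRing A d f)
      (fun i : Fin r => SplitRing (FactRing A d f) (d i) (FactRing.univFactor A d f i)) :=
    fun v => F (e v)
  have hgmap : ∀ i : Fin r, (FactRing.univFactor A d f i).map
      (algebraMap (FactRing A d f) (PiTensorProduct (FactRing A d f)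
        (fun i : Fin r => SplitRing (FactRing A d f) (d i) (FactRing.univFactor A d f i)))) =
      ∏ k : Fin (d i), (X - C (F ⟨i, k⟩)) := by
    intro i
    rw [show algebraMap (FactRing A d f) (PiTensorProduct (FactRing A d f)
        (fun i : Fin r => SplitRing (FactRing A d f) (d i) (FactRing.univFactor A d f i)))
      = (ι i).toRingHom.comp (algebraMap (FactRing A d f)
          (SplitRing (FactRing A d f) (d i) (FactRing.univFactor A d f i)))
      from ((ι i).comp_algebraMap).symm]
    rw [← Polynomial.map_map, splitRing_map_eq, Polynomial.map_prod]
    refine Finset.prod_congr rfl fun k _ => ?_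
    rw [Polynomial.map_sub, Polynomial.map_X, Polynomial.map_C]
    rfl
  have ht : f.map (algebraMap A (PiTensorProduct (FactRing A d f)
      (fun i : Fin r => SplitRing (FactRing A d f) (d i) (FactRing.univFactor A d f i)))) =
      ∏ v : Fin n, (X - C (t v)) := by
    rw [show algebraMap A (PiTensorProduct (FactRing A d f)
        (fun i : Fin r => SplitRing (FactRing A d f) (d i) (FactRing.univFactor A d f i)))
      = (algebraMap (FactRing A d f) _).comp (algebraMap A (FactRing A d f)) from rfl]
    rw [← Polynomial.map_map, factRing_map_eq, Polynomial.map_prod]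
    rw [Fintype.prod_equiv e (fun v => X - C (t v)) (fun s => X - C (F s)) (fun v => rfl)]
    rw [← Finset.univ_sigma_univ, Finset.prod_sigma]
    exact Finset.prod_congr rfl fun i _ => hgmap i
  let Φ := splitLift A n f t ht
  -- the backward data
  let H : Fin r → Polynomial (SplitRing A n f) :=
    fun i => ∏ k : Fin (d i), (X - C (splitRoot A n f (e.symm ⟨i, k⟩)))
  let b : ((i : Fin r) × Fin (d i)) → SplitRing A n f := fun s => (H s.1).coeff (s.2 : ℕ)
  have hH : ∀ i : Fin r, H i = X ^ (d i) + ∑ j : Fin (d i), C (b ⟨i, j⟩) * X ^ (j : ℕ) :=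
    fun i => prod_X_sub_C_eq_sum _
  have hb : f.map (algebraMap A (SplitRing A n f)) =
      ∏ i : Fin r, (X ^ (d i) + ∑ j : Fin (d i), C (b ⟨i, j⟩) * X ^ (j : ℕ)) := by
    rw [splitRing_map_eq]
    rw [Fintype.prod_equiv e (fun v => X - C (splitRoot A n f v))
      (fun s : (i : Fin r) × Fin (d i) => X - C (splitRoot A n f (e.symm s)))
      (fun v => by simp)]
    rw [← Finset.univ_sigma_univ, Finset.prod_sigma]
    exact Finset.prod_congr rfl fun i _ => hH i
  let χ : FactRing A d f →ₐ[A] SplitRing A n f := factLift A d f b hb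
  letI : Algebra (FactRing A d f) (SplitRing A n f) := χ.toRingHom.toAlgebra
  have hgχ : ∀ i : Fin r, (FactRing.univFactor A d f i).map
      (algebraMap (FactRing A d f) (SplitRing A n f)) =
      ∏ k : Fin (d i), (X - C (splitRoot A n f (e.symm ⟨i, k⟩))) := by
    intro i
    rw [show algebraMap (FactRing A d f) (SplitRing A n f)
        = (factLift A d f b hb : FactRing A d f →+* SplitRing A n f) from rfl]
    rw [univFactor_map_factLift A d f b hb i]
    exact (hH i).symm
  let ψ : (i : Fin r) →
      SplitRing (FactRing A d f) (d i) (FactRing.univFactor A d f i) →ₐ[FactRing A d f]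
        SplitRing A n f :=
    fun i => splitLift (FactRing A d f) (d i) (FactRing.univFactor A d f i)
      (fun k => splitRoot A n f (e.symm ⟨i, k⟩)) (hgχ i)
  let Ψ : PiTensorProduct (FactRing A d f)
      (fun i : Fin r => SplitRing (FactRing A d f) (d i) (FactRing.univFactor A d f i))
      →ₐ[FactRing A d f] SplitRing A n f :=
    piProdAlgHom ψ
  have hΨι : ∀ (i : Fin r) (y : SplitRing (FactRing A d f) (d i) (FactRing.univFactor A d f i)),
      Ψ (ι i y) = ψ i y := by
    intro i y
    exact piProdAlgHom_single ψ i y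
  -- the composite Φ ∘ χ is the structure map of the tensor product
  have hΦχ : ∀ c : FactRing A d f, Φ (χ c) = algebraMap (FactRing A d f)
      (PiTensorProduct (FactRing A d f)
        (fun i : Fin r => SplitRing (FactRing A d f) (d i) (FactRing.univFactor A d f i))) c := by
    let algCT : FactRing A d f →ₐ[A] PiTensorProduct (FactRing A d f)
        (fun i : Fin r => SplitRing (FactRing A d f) (d i) (FactRing.univFactor A d f i)) :=
      { toRingHom := algebraMap (FactRing A d f) _
        commutes' := fun a => rfl }
    have key : Φ.comp χ = algCT := by
      apply factRing_hom_ext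
      rintro ⟨i, j⟩
      show Φ (χ (factCoeff A d f ⟨i, j⟩)) = algebraMap (FactRing A d f) _ (factCoeff A d f ⟨i, j⟩)
      rw [show χ (factCoeff A d f ⟨i, j⟩) = b ⟨i, j⟩ from factLift_coeff A d f b hb ⟨i, j⟩]
      have h2 : (H i).map (Φ : SplitRing A n f →+* _) = (FactRing.univFactor A d f i).map
          (algebraMap (FactRing A d f) (PiTensorProduct (FactRing A d f)
            (fun i : Fin r => SplitRing (FactRing A d f) (d i)
              (FactRing.univFactor A d f i)))) := by
        rw [hgmap i, Polynomial.map_prod]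
        refine Finset.prod_congr rfl fun k _ => ?_
        have hroot : Φ (splitRoot A n f (e.symm ⟨i, k⟩)) = F ⟨i, k⟩ := by
          rw [splitLift_root A n f t ht (e.symm ⟨i, k⟩)]
          show F (e (e.symm ⟨i, k⟩)) = F ⟨i, k⟩
          rw [e.apply_symm_apply]
        simp [hroot]
      have h3 : Φ (b ⟨i, j⟩) = ((H i).map (Φ : SplitRing A n f →+* _)).coeff (j : ℕ) :=
        (Polynomial.coeff_map _ _).symm
      rw [h3, h2, Polynomial.coeff_map]
      congr 1
      rw [show (FactRing.univFactor A d f i)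
        = (genericFactor A d i).map (Ideal.Quotient.mk _) from rfl]
      erw [Polynomial.coeff_map, genericFactor_coeff A d i j]
      rfl
    intro c
    exact DFunLike.congr_fun key c
  -- Φ as a `FactRing`-algebra homomorphism
  let Φc : SplitRing A n f →ₐ[FactRing A d f] PiTensorProduct (FactRing A d f)
      (fun i : Fin r => SplitRing (FactRing A d f) (d i) (FactRing.univFactor A d f i)) :=
    { Φ.toRingHom with commutes' := hΦχ }
  have hleft : ∀ x : SplitRing A n f, Ψ (Φ x) = x := by
    let ΨΦ : SplitRing A n f →ₐ[A] SplitRing A n f :=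
      { toRingHom := Ψ.toRingHom.comp Φ.toRingHom
        commutes' := fun a => by
          show Ψ (Φ (algebraMap A _ a)) = _
          rw [Φ.commutes]
          show Ψ (algebraMap (FactRing A d f) _ (algebraMap A (FactRing A d f) a)) = _
          rw [Ψ.commutes]
          exact χ.commutes a }
    have key : ΨΦ = AlgHom.id A (SplitRing A n f) := by
      apply splitRing_hom_ext
      intro v
      show Ψ (Φ (splitRoot A n f v)) = splitRoot A n f v
      rw [splitLift_root A n f t ht v]
      show Ψ (ι (e v).1 (splitRoot (FactRing A d f) (d (e v).1)
        (FactRing.univFactor A d f (e v).1) (e v).2)) = _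
      rw [hΨι]
      rw [show ψ (e v).1 (splitRoot (FactRing A d f) (d (e v).1)
          (FactRing.univFactor A d f (e v).1) (e v).2)
        = splitRoot A n f (e.symm ⟨(e v).1, (e v).2⟩)
        from splitLift_root (FactRing A d f) (d (e v).1) (FactRing.univFactor A d f (e v).1)
          (fun k => splitRoot A n f (e.symm ⟨(e v).1, k⟩)) (hgχ (e v).1) (e v).2]
      congr 1
      exact e.symm_apply_apply v
    intro x
    exact DFunLike.congr_fun key x
  have hright : ∀ y : PiTensorProduct (FactRing A d f)
      (fun i : Fin r => SplitRing (FactRing A d f) (d i) (FactRing.univFactor A d f i)),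
      Φ (Ψ y) = y := by
    have key : Φc.comp Ψ = AlgHom.id (FactRing A d f) (PiTensorProduct (FactRing A d f)
        (fun i : Fin r => SplitRing (FactRing A d f) (d i) (FactRing.univFactor A d f i))) := by
      apply PiTensorProduct.algHom_ext
      intro i
      apply splitRing_hom_ext
      intro k
      show Φ (Ψ (ι i (splitRoot (FactRing A d f) (d i) (FactRing.univFactor A d f i) k)))
        = ι i (splitRoot (FactRing A d f) (d i) (FactRing.univFactor A d f i) k)
      rw [hΨι]
      rw [show ψ i (splitRoot (FactRing A d f) (d i) (FactRing.univFactor A d f i) k)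
        = splitRoot A n f (e.symm ⟨i, k⟩)
        from splitLift_root (FactRing A d f) (d i) (FactRing.univFactor A d f i)
          (fun k => splitRoot A n f (e.symm ⟨i, k⟩)) (hgχ i) k]
      rw [show Φ (splitRoot A n f (e.symm ⟨i, k⟩)) = t (e.symm ⟨i, k⟩)
        from splitLift_root A n f t ht (e.symm ⟨i, k⟩)]
      show F (e (e.symm ⟨i, k⟩)) = F ⟨i, k⟩
      rw [e.apply_symm_apply]
    intro y
    exact DFunLike.congr_fun key y
  have hsmul : ∀ (a : A) (x : SplitRing A n f),
      Φ (a • x) = algebraMap A (FactRing A d f) a • Φ x := by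
    intro a x
    rw [Algebra.smul_def a x, map_mul]
    rw [show (algebraMap A (FactRing A d f) a • Φ x)
      = algebraMap (FactRing A d f) _ (algebraMap A (FactRing A d f) a) * Φ x
      from Algebra.smul_def _ _]
    congr 1
    rw [Φ.commutes]
    rfl
  exact Nonempty.intro (@LinearEquiv.mk A A _ _ (RingHom.id A) (RingHom.id A) _ _
    (SplitRing A n f) _ _ _ _
    (Module.compHom _ (algebraMap A (FactRing A d f)))
    (@LinearMap.mk A A _ _ (RingHom.id A) (SplitRing A n f) _ _ _ _
      (Module.compHom _ (algebraMap A (FactRing A d f)))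
      ⟨Φ, fun x y => map_add Φ x y⟩ hsmul) Ψ hleft hright)
end

section
/- Let B be a graded-commutative Z-graded superalgebra with finite-dimensional graded pieces, and consider the one-parameter family of algebras B_t obtained by scaling all odd generators by t. Let f ∈ B be homogeneous with specializations f_t, and let f_0 be the specialization at t = 0. If multiplication by f_0 is injective on B (i.e., f_0 is a nonzerodivisor), then f = f_1 is a nonzerodivisor on B. -/
open Polynomial DirectSum
set_option synthInstance.maxHeartbeats 400000
set_option maxHeartbeats 1000000

/-- Auxiliary: the homogeneous case. -/
theorem aux_homog
    (B : Type*) [Ring B] [Algebra ℂ B]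
    (𝒜 : ℤ → Submodule ℂ B) [GradedAlgebra 𝒜]
    (hfd : ∀ i : ℤ, FiniteDimensional ℂ (𝒜 i))
    (φ : ℂ → (B →ₐ[ℂ] B))
    (hone : φ 1 = AlgHom.id ℂ B)
    (hmul : ∀ s t : ℂ, (φ s).comp (φ t) = φ (s * t))
    (hgraded : ∀ (t : ℂ) (i : ℤ), ∀ x ∈ 𝒜 i, φ t x ∈ 𝒜 i)
    (hpoly : ∀ x : B, ∃ (k : ℕ) (c : Fin k → B), ∀ t : ℂ, φ t x = ∑ j : Fin k, t ^ (j : ℕ) • c j)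
    (d₀ : ℤ) (f : B) (hf : f ∈ 𝒜 d₀)
    (h0 : ∀ y : B, φ 0 f * y = 0 → y = 0) :
    ∀ i : ℤ, ∀ y ∈ 𝒜 i, f * y = 0 → y = 0 := by
  intro i y hy hfy
  haveI := hfd i
  -- the projection onto degree `d₀ + i`
  let π : B →ₗ[ℂ] 𝒜 (d₀ + i) :=
    (DFinsupp.lapply (d₀ + i)).comp (decomposeAlgEquiv 𝒜).toAlgHom.toLinearMap
  have hπ : ∀ b : B, b ∈ 𝒜 (d₀ + i) → (π b : B) = b := by
    intro b hb
    exact DirectSum.decompose_of_mem_same 𝒜 hb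
  -- multiplication maps 𝒜 i → 𝒜 (d₀ + i)
  let L : B → (𝒜 i →ₗ[ℂ] 𝒜 (d₀ + i)) := fun b =>
    π.comp ((LinearMap.mulLeft ℂ b).comp (𝒜 i).subtype)
  have hL : ∀ b x, L b x = π (b * (x : B)) := fun _ _ => rfl
  -- `L (φ 0 f)` is injective
  have hM0 : Function.Injective (L (φ 0 f)) := by
    intro x₁ x₂ hx
    have h : ∀ x : 𝒜 i, L (φ 0 f) x = 0 → x = 0 := by
      intro x hxz
      have hmem : φ 0 f * (x : B) ∈ 𝒜 (d₀ + i) :=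
        SetLike.mul_mem_graded (hgraded 0 d₀ f hf) x.2
      have : (π (φ 0 f * (x : B)) : B) = φ 0 f * (x : B) := hπ _ hmem
      have hz : φ 0 f * (x : B) = 0 := by
        rw [← this, hL] at *
        rw [hxz]; simp
      exact Subtype.ext (h0 _ hz)
    have := h (x₁ - x₂) (by rw [map_sub, hx, sub_self])
    have := sub_eq_zero.mp (by exact_mod_cast this)
    exact this
  obtain ⟨g, hg⟩ := (L (φ 0 f)).exists_leftInverse_of_injective
    (LinearMap.ker_eq_bot.mpr hM0)
  obtain ⟨k, c, hc⟩ := hpoly f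
  -- the endomorphism family, polynomial in t
  set E : ℂ → (𝒜 i →ₗ[ℂ] 𝒜 i) := fun t => g.comp (L (φ t f)) with hEdef
  have hLpoly : ∀ t : ℂ, L (φ t f) = ∑ j : Fin k, t ^ (j : ℕ) • L (c j) := by
    intro t
    ext x
    simp only [hL, LinearMap.sum_apply, LinearMap.smul_apply, hc t, Finset.sum_smul,
      Finset.sum_mul, smul_mul_assoc, map_sum, map_smul]
  have hE : ∀ t : ℂ, E t = ∑ j : Fin k, t ^ (j : ℕ) • (g.comp (L (c j))) := by
    intro t
    ext x
    simp only [hEdef, LinearMap.comp_apply, hLpoly t, LinearMap.sum_apply,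
      LinearMap.smul_apply, map_sum, map_smul]
  -- matrices and the determinant polynomial
  let b := Module.finBasis ℂ (𝒜 i)
  let A : Fin k → Matrix _ _ ℂ := fun j => LinearMap.toMatrix b b (g.comp (L (c j)))
  let Q : Matrix _ _ ℂ[X] := ∑ j : Fin k, (X : ℂ[X]) ^ (j : ℕ) • (A j).map Polynomial.C
  have hQmap : ∀ t : ℂ, Q.map (eval t) = LinearMap.toMatrix b b (E t) := by
    intro t
    ext r s
    rw [hE t]
    simp only [Q, A, Matrix.map_apply, Matrix.sum_apply, Matrix.smul_apply, map_sum,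
      LinearEquiv.map_smul, smul_eq_mul, eval_finset_sum, eval_mul, eval_pow, eval_X, eval_C]
  have hPt : ∀ t : ℂ, eval t Q.det = LinearMap.det (E t) := by
    intro t
    have h1 : (evalRingHom t) Q.det = (Q.map (evalRingHom t)).det := RingHom.map_det _ _
    have h2 : Q.map (evalRingHom t) = Q.map (eval t) := rfl
    rw [show eval t Q.det = (evalRingHom t) Q.det from rfl, h1, h2, hQmap t,
      LinearMap.det_toMatrix]
  have hP0 : eval 0 Q.det = 1 := by
    rw [hPt 0]
    have : E 0 = LinearMap.id := hg
    rw [this]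
    exact LinearMap.det_id
  have hQne : Q.det ≠ 0 := fun h => by simp [h] at hP0
  -- choose t ≠ 0 avoiding the roots of the determinant polynomial
  obtain ⟨t, ht⟩ := ((Polynomial.finite_setOf_isRoot hQne).union
    (Set.finite_singleton (0 : ℂ))).infinite_compl.nonempty
  have ht0 : t ≠ 0 := fun h => ht (Or.inr (by simp [h]))
  have hdet : LinearMap.det (E t) ≠ 0 := by
    rw [← hPt t]
    exact fun h => ht (Or.inl h)
  -- E t is injective, hence so is L (φ t f)
  have hEinj : Function.Injective (E t) := by
    have hAu : IsUnit (LinearMap.toMatrix b b (E t)) := by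
      rw [Matrix.isUnit_iff_isUnit_det, LinearMap.det_toMatrix]
      exact isUnit_iff_ne_zero.mpr hdet
    have : IsUnit (E t) := by
      have := hAu.map (LinearMap.toMatrixAlgEquiv b).symm.toRingHom
      simpa [LinearMap.toMatrixAlgEquiv, LinearMap.toMatrix] using this
    exact LinearMap.ker_eq_bot.mp (LinearMap.isUnit_iff_ker_eq_bot _ |>.mp this)
  have hLt : Function.Injective (L (φ t f)) := by
    intro x₁ x₂ hx
    exact hEinj (by simp only [hEdef, LinearMap.comp_apply, hx])
  -- conclude
  have hyt : φ t f * φ t y = 0 := by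
    rw [← map_mul, hfy, map_zero]
  have hytm : φ t y ∈ 𝒜 i := hgraded t i y hy
  have : L (φ t f) ⟨φ t y, hytm⟩ = 0 := by
    rw [hL]
    simp only [hyt, map_zero]
  have hz : (⟨φ t y, hytm⟩ : 𝒜 i) = 0 := hLt (by rw [this, map_zero])
  have hz' : φ t y = 0 := congrArg Subtype.val hz
  have : φ t⁻¹ (φ t y) = y := by
    rw [← AlgHom.comp_apply, hmul, inv_mul_cancel₀ ht0, hone, AlgHom.id_apply]
  rw [← this, hz', map_zero]

theorem nonzerodivisor_of_specialization_nonzerodivisor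
    (B : Type*) [Ring B] [Algebra ℂ B]
    (𝒜 : ℤ → Submodule ℂ B) [GradedAlgebra 𝒜]
    (hfd : ∀ i : ℤ, FiniteDimensional ℂ (𝒜 i))
    (φ : ℂ → (B →ₐ[ℂ] B))
    (hone : φ 1 = AlgHom.id ℂ B)
    (hmul : ∀ s t : ℂ, (φ s).comp (φ t) = φ (s * t))
    (hgraded : ∀ (t : ℂ) (i : ℤ), ∀ x ∈ 𝒜 i, φ t x ∈ 𝒜 i)
    (hpoly : ∀ x : B, ∃ (k : ℕ) (c : Fin k → B), ∀ t : ℂ, φ t x = ∑ j : Fin k, t ^ (j : ℕ) • c j)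
    (d₀ : ℤ) (f : B) (hf : f ∈ 𝒜 d₀)
    (h0 : ∀ y : B, φ 0 f * y = 0 → y = 0) :
    ∀ y : B, f * y = 0 → y = 0 := by
  intro y hfy
  -- reduce to homogeneous components
  have hcomp : ∀ i : ℤ, (DirectSum.decompose 𝒜 y i : B) = 0 := by
    intro i
    have h1 : (DirectSum.decompose 𝒜 (f * y) (d₀ + i) : B)
        = f * (DirectSum.decompose 𝒜 y i : B) :=
      DirectSum.coe_decompose_mul_add_of_left_mem 𝒜 hf
    rw [hfy] at h1
    simp only [DirectSum.decompose_zero, DirectSum.zero_apply,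
      ZeroMemClass.coe_zero] at h1
    exact aux_homog B 𝒜 hfd φ hone hmul hgraded hpoly d₀ f hf h0 i _
      (DirectSum.decompose 𝒜 y i).2 h1.symm
  classical
  have := DirectSum.sum_support_decompose 𝒜 y
  rw [← this]
  exact Finset.sum_eq_zero fun i _ => hcomp i
end

section
/- Let A_1, A_2, B, C_1, C_2 be complex vector spaces with a_1 + a_2 + max(c_1,c_2) ≤ b (dimensions as indicated). Define F = Fl(a_1, a_1+c_1; B), the partial flag variety of flags R ⊂ S ⊂ B with dim R = a_1, dim S = a_1+c_1, and let Z̃ be the total space of the vector bundle Hom(A_1,R) ⊕ Hom(C_1,S) ⊕ Hom(B/S, A_2) ⊕ Hom(B/R, C_2) over F. Then the natural projection π: Z̃ → Hom(A_1,B)×Hom(B,A_2)×Hom(C_1,B)×Hom(B,C_2) is a birational morphism onto the variety Z of quadruples (α_1,α_2,γ_1,γ_2) with α_2α_1 = γ_2α_1 = α_2γ_1 = 0. -/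
open Module Submodule

/-- Any dimension between those of nested submodules is achieved by an
intermediate submodule. -/
private lemma exists_intermediate_submodule {K V : Type*} [Field K] [AddCommGroup V]
    [Module K V] [FiniteDimensional K V] (P Q : Submodule K V) (hPQ : P ≤ Q) (n : ℕ)
    (h1 : finrank K P ≤ n) (h2 : n ≤ finrank K Q) :
    ∃ W : Submodule K V, P ≤ W ∧ W ≤ Q ∧ finrank K W = n := by
  induction n, h1 using Nat.le_induction with
  | base => exact ⟨P, le_rfl, hPQ, rfl⟩
  | succ n hn ih =>
    obtain ⟨W, hPW, hWQ, hW⟩ := ih (by omega)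
    have hlt : W < Q := lt_of_le_of_ne hWQ (by rintro rfl; omega)
    obtain ⟨x, hxQ, hxW⟩ := SetLike.exists_of_lt hlt
    have hx0 : x ≠ 0 := fun h => hxW (h ▸ W.zero_mem)
    have hinf : W ⊓ (K ∙ x) = ⊥ := by
      rw [eq_bot_iff]
      intro y hy
      rw [Submodule.mem_inf] at hy
      obtain ⟨c, rfl⟩ := Submodule.mem_span_singleton.1 hy.2
      rcases eq_or_ne c 0 with rfl | hc
      · simp
      · exact absurd (by simpa [smul_smul, inv_mul_cancel₀ hc] using W.smul_mem c⁻¹ hy.1) hxW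
    have hadd := Submodule.finrank_sup_add_finrank_inf_eq W (K ∙ x)
    rw [hinf, finrank_bot, finrank_span_singleton hx0] at hadd
    exact ⟨W ⊔ (K ∙ x), le_trans hPW le_sup_left,
      sup_le hWQ ((Submodule.span_singleton_le_iff_mem x Q).2 hxQ), by omega⟩

theorem kempf_collapsing_birational_onto_variety
    (a₁ a₂ b c₁ c₂ : ℕ)
    (A₁ A₂ B C₁ C₂ : Type*)
    [AddCommGroup A₁] [Module ℂ A₁] [FiniteDimensional ℂ A₁]
    [AddCommGroup A₂] [Module ℂ A₂] [FiniteDimensional ℂ A₂]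
    [AddCommGroup B] [Module ℂ B] [FiniteDimensional ℂ B]
    [AddCommGroup C₁] [Module ℂ C₁] [FiniteDimensional ℂ C₁]
    [AddCommGroup C₂] [Module ℂ C₂] [FiniteDimensional ℂ C₂]
    (hA₁ : Module.finrank ℂ A₁ = a₁) (hA₂ : Module.finrank ℂ A₂ = a₂)
    (hB : Module.finrank ℂ B = b) (hC₁ : Module.finrank ℂ C₁ = c₁)
    (hC₂ : Module.finrank ℂ C₂ = c₂)
    (hdim : a₁ + a₂ + max c₁ c₂ ≤ b) :
    -- the ambient affine space of quadruples
    let Quad := (A₁ →ₗ[ℂ] B) × (B →ₗ[ℂ] A₂) × (C₁ →ₗ[ℂ] B) × (B →ₗ[ℂ] C₂)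
    -- the variety Z
    let Z : Set Quad := { z |
      z.2.1 ∘ₗ z.1 = 0 ∧ z.2.2.2 ∘ₗ z.1 = 0 ∧ z.2.1 ∘ₗ z.2.2.1 = 0 }
    -- the total space Z̃ over the flag variety Fl(a₁, a₁+c₁; B)
    let Zt : Set (Submodule ℂ B × Submodule ℂ B × Quad) := { w |
      w.1 ≤ w.2.1 ∧
      Module.finrank ℂ w.1 = a₁ ∧ Module.finrank ℂ w.2.1 = a₁ + c₁ ∧
      LinearMap.range w.2.2.1 ≤ w.1 ∧
      LinearMap.range w.2.2.2.2.1 ≤ w.2.1 ∧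
      w.2.1 ≤ LinearMap.ker w.2.2.2.1 ∧
      w.1 ≤ LinearMap.ker w.2.2.2.2.2 }
    -- the projection π : Z̃ → affine space of quadruples
    let π : Submodule ℂ B × Submodule ℂ B × Quad → Quad := fun w => w.2.2
    -- the open locus where α₁ + γ₁ has maximal rank a₁ + c₁
    let maxRank : Quad → Prop := fun z =>
      Module.finrank ℂ (LinearMap.range z.1 ⊔ LinearMap.range z.2.2.1 : Submodule ℂ B)
        = a₁ + c₁
    -- π is surjective onto Z ...
    π '' Zt = Z ∧
    -- ... and is injective over the maximal-rank locus, with image that locus of Z ...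
    Set.InjOn π { w ∈ Zt | maxRank (π w) } ∧
    π '' { w ∈ Zt | maxRank (π w) } = { z ∈ Z | maxRank z } ∧
    -- ... which is nonempty
    { z ∈ Z | maxRank z }.Nonempty := by
  intro Quad Z Zt π maxRank
  have hc₁ : c₁ ≤ max c₁ c₂ := le_max_left _ _
  have hc₂ : c₂ ≤ max c₁ c₂ := le_max_right _ _
  -- every point of Z̃ maps into Z
  have hZtZ : ∀ w ∈ Zt, π w ∈ Z := by
    rintro ⟨R, S, z⟩ ⟨hRS, hR, hS, hα₁, hγ₁, hα₂, hγ₂⟩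
    exact ⟨LinearMap.range_le_ker_iff.1 (le_trans hα₁ (le_trans hRS hα₂)),
      LinearMap.range_le_ker_iff.1 (le_trans hα₁ hγ₂),
      LinearMap.range_le_ker_iff.1 (le_trans hγ₁ hα₂)⟩
  -- every point of Z lifts to Z̃
  have hconstruct : ∀ z ∈ Z, ∃ w ∈ Zt, π w = z := by
    rintro ⟨α₁, α₂, γ₁, γ₂⟩ ⟨h1, h2, h3⟩
    have hk1 : LinearMap.range α₁ ≤ LinearMap.ker α₂ := LinearMap.range_le_ker_iff.2 h1
    have hk2 : LinearMap.range α₁ ≤ LinearMap.ker γ₂ := LinearMap.range_le_ker_iff.2 h2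
    have hk3 : LinearMap.range γ₁ ≤ LinearMap.ker α₂ := LinearMap.range_le_ker_iff.2 h3
    have e1 := LinearMap.finrank_range_add_finrank_ker α₂
    have e2 := LinearMap.finrank_range_add_finrank_ker γ₂
    rw [hB] at e1 e2
    have e3 : finrank ℂ (LinearMap.range α₂) ≤ a₂ := hA₂ ▸ (LinearMap.range α₂).finrank_le
    have e4 : finrank ℂ (LinearMap.range γ₂) ≤ c₂ := hC₂ ▸ (LinearMap.range γ₂).finrank_le
    have e5 := Submodule.finrank_sup_add_finrank_inf_eq (LinearMap.ker α₂) (LinearMap.ker γ₂)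
    have e6 : finrank ℂ ((LinearMap.ker α₂) ⊔ (LinearMap.ker γ₂) : Submodule ℂ B) ≤ b :=
      hB ▸ Submodule.finrank_le _
    have e7 : finrank ℂ (LinearMap.range α₁) ≤ a₁ := hA₁ ▸ LinearMap.finrank_range_le α₁
    have e8 : finrank ℂ (LinearMap.range γ₁) ≤ c₁ := hC₁ ▸ LinearMap.finrank_range_le γ₁
    obtain ⟨R, hR1, hR2, hR3⟩ := exists_intermediate_submodule (LinearMap.range α₁)
      (LinearMap.ker α₂ ⊓ LinearMap.ker γ₂) (le_inf hk1 hk2) a₁ e7 (by omega)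
    have e9 := Submodule.finrank_sup_add_finrank_inf_eq R (LinearMap.range γ₁)
    obtain ⟨S, hS1, hS2, hS3⟩ := exists_intermediate_submodule (R ⊔ LinearMap.range γ₁)
      (LinearMap.ker α₂) (sup_le (le_trans hR2 inf_le_left) hk3) (a₁ + c₁)
      (by omega) (by omega)
    exact ⟨(R, S, α₁, α₂, γ₁, γ₂), ⟨le_trans le_sup_left hS1, hR3, hS3, hR1,
      le_trans le_sup_right hS1, hS2, le_trans hR2 inf_le_right⟩, rfl⟩
  -- over the maximal-rank locus, the flag is determined by the quadruple
  have key : ∀ w ∈ Zt, maxRank (π w) →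
      w.1 = LinearMap.range w.2.2.1 ∧
        w.2.1 = LinearMap.range w.2.2.1 ⊔ LinearMap.range w.2.2.2.2.1 := by
    rintro ⟨R, S, z⟩ ⟨hRS, hR, hS, hα₁, hγ₁, hα₂, hγ₂⟩ hmax
    dsimp only at hRS hR hS hα₁ hγ₁ hα₂ hγ₂ ⊢
    have hmax' : finrank ℂ (LinearMap.range z.1 ⊔ LinearMap.range z.2.2.1 : Submodule ℂ B)
        = a₁ + c₁ := hmax
    have hsupS : LinearMap.range z.1 ⊔ LinearMap.range z.2.2.1 ≤ S :=
      sup_le (le_trans hα₁ hRS) hγ₁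
    have hSeq := Submodule.eq_of_le_of_finrank_le hsupS (by rw [hS, hmax'])
    have e9 := Submodule.finrank_sup_add_finrank_inf_eq (LinearMap.range z.1)
      (LinearMap.range z.2.2.1)
    rw [hmax'] at e9
    have e8 : finrank ℂ (LinearMap.range z.2.2.1) ≤ c₁ := hC₁ ▸ LinearMap.finrank_range_le _
    have hReq := Submodule.eq_of_le_of_finrank_le hα₁ (by rw [hR]; omega)
    exact ⟨hReq.symm, hSeq.symm⟩
  refine ⟨?_, ?_, ?_, ?_⟩
  · apply Set.Subset.antisymm
    · rintro z ⟨w, hw, rfl⟩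
      exact hZtZ w hw
    · intro z hz
      obtain ⟨w, hw, hwz⟩ := hconstruct z hz
      exact ⟨w, hw, hwz⟩
  · rintro w ⟨hw, hwm⟩ w' ⟨hw', hwm'⟩ heq
    obtain ⟨h1, h2⟩ := key w hw hwm
    obtain ⟨h1', h2'⟩ := key w' hw' hwm'
    obtain ⟨R, S, z⟩ := w
    obtain ⟨R', S', z'⟩ := w'
    have hz : z = z' := heq
    subst hz
    simp only at h1 h2 h1' h2'
    rw [Prod.mk.injEq, Prod.mk.injEq]
    exact ⟨h1.trans h1'.symm, h2.trans h2'.symm, rfl⟩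
  · apply Set.Subset.antisymm
    · rintro z ⟨w, ⟨hw, hwm⟩, rfl⟩
      exact ⟨hZtZ w hw, hwm⟩
    · rintro z ⟨hz, hzm⟩
      obtain ⟨w, hw, rfl⟩ := hconstruct z hz
      exact ⟨w, ⟨hw, hzm⟩, rfl⟩
  · obtain ⟨W, -, -, hW⟩ := exists_intermediate_submodule (⊥ : Submodule ℂ B) ⊤ bot_le
      (a₁ + c₁) (by simp) (by rw [finrank_top, hB]; omega)
    have hprod : finrank ℂ (A₁ × C₁) = finrank ℂ W := by
      rw [Module.finrank_prod, hA₁, hC₁, hW]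
    obtain ⟨e⟩ := FiniteDimensional.nonempty_linearEquiv_of_finrank_eq hprod
    set φ : A₁ × C₁ →ₗ[ℂ] B := W.subtype ∘ₗ e.toLinearMap with hφ
    have hφinj : Function.Injective φ := (Submodule.injective_subtype W).comp e.injective
    set α₁ : A₁ →ₗ[ℂ] B := φ ∘ₗ LinearMap.inl ℂ A₁ C₁ with hα₁
    set γ₁ : C₁ →ₗ[ℂ] B := φ ∘ₗ LinearMap.inr ℂ A₁ C₁ with hγ₁
    have hsup : LinearMap.range α₁ ⊔ LinearMap.range γ₁ = LinearMap.range φ := by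
      apply le_antisymm
      · exact sup_le (LinearMap.range_comp_le_range _ _) (LinearMap.range_comp_le_range _ _)
      · rintro x ⟨⟨a, c⟩, rfl⟩
        have hx : φ (a, c) = α₁ a + γ₁ c := by
          rw [hα₁, hγ₁]
          simp only [LinearMap.comp_apply, LinearMap.inl_apply, LinearMap.inr_apply,
            ← map_add, Prod.mk_add_mk, add_zero, zero_add]
        rw [hx]
        exact Submodule.add_mem_sup (LinearMap.mem_range_self α₁ a)
          (LinearMap.mem_range_self γ₁ c)
    have hrank : finrank ℂ (LinearMap.range φ) = a₁ + c₁ := by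
      rw [LinearMap.finrank_range_of_inj hφinj, Module.finrank_prod, hA₁, hC₁]
    refine ⟨(α₁, 0, γ₁, 0), ⟨?_, ?_, ?_⟩, ?_⟩
    · exact LinearMap.zero_comp _
    · exact LinearMap.zero_comp _
    · exact LinearMap.zero_comp _
    · show finrank ℂ (LinearMap.range α₁ ⊔ LinearMap.range γ₁ : Submodule ℂ B) = a₁ + c₁
      rw [hsup, hrank]
end

section
/- In the ring of symmetric functions in two independent alphabets (or for characters of GL(m|n)), let h(k) and h̄(k) denote the complete homogeneous symmetric functions of the two families (with h(k) = h̄(k) = 0 for k < 0 and = 1 for k = 0). Fix partitions λ with at most p parts and μ with at most q parts, and form the (p+q)×(p+q) matrix M|L with M_{i,j} = h̄(μ_{q+1-j} - i + j) for 1 ≤ j ≤ q and L_{i,j} = h(λ_j + i - q - j) for 1 ≤ j ≤ p (columns q+1,...,q+p). Then the Laplace expansion along the first q columns yields det(M|L) = Σ_γ (-1)^{|γ|} s_{μ/γ}[h̄] · s_{λ/γ^T}[h], where the sum is over all partitions γ contained in the q × p rectangle and s_{α/β}[h] denotes the Jacobi–Trudi determinant det(h(α_j - β_i - j + i)). -/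
/-!
STATEMENT 12: Laplace expansion of the composite (supersymmetric) Schur determinant.
With `h, h̄ : ℤ → R` the two families of complete homogeneous symmetric functions
(`h k = h̄ k = 0` for `k < 0`, `= 1` for `k = 0`), partitions `λ` (≤ p parts) and `μ`
(≤ q parts), and the `(p+q)×(p+q)` matrix `M|L` with `M_{i,j} = h̄(μ_{q+1-j} - i + j)`
(first q columns) and `L_{i,j} = h(λ_j + i - q - j)` (last p columns), one has
`det(M|L) = Σ_γ (-1)^{|γ|} s_{μ/γ}[h̄] · s_{λ/γᵀ}[h]`, summing over partitions `γ` in the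
q × p box, where `s_{α/β}[h] = det (h (α_j - β_i - j + i))` is the Jacobi–Trudi determinant.
-/

namespace DetCompAux
open Finset Equiv Matrix

variable {q p : ℕ}

lemma compl_card {S : Finset (Fin (q+p))} (hS : S.card = q) : Sᶜ.card = p := by
  rw [Finset.card_compl, hS]; simp

/-! ### the shuffle permutation -/

def shuffleFun (S : Finset (Fin (q+p))) (hS : S.card = q) : Fin (q+p) → Fin (q+p) :=
  fun x => if h : (x:ℕ) < q then S.orderEmbOfFin hS ⟨x, h⟩
    else Sᶜ.orderEmbOfFin (compl_card hS) ⟨(x:ℕ) - q, by have := x.isLt; omega⟩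

lemma shuffleFun_inj (S : Finset (Fin (q+p))) (hS : S.card = q) :
    Function.Injective (shuffleFun S hS) := by
  intro x y hxy
  unfold shuffleFun at hxy
  by_cases hx : (x:ℕ) < q <;> by_cases hy : (y:ℕ) < q <;>
    simp only [hx, hy, dif_pos, dif_neg, not_false_iff] at hxy
  · have := (S.orderEmbOfFin hS).injective hxy
    exact Fin.ext (congrArg Fin.val this : _)
  · exfalso
    have h1 := S.orderEmbOfFin_mem hS ⟨x, hx⟩
    have h2 := Sᶜ.orderEmbOfFin_mem (compl_card hS) ⟨(y:ℕ) - q, by have := y.isLt; omega⟩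
    rw [← hxy] at h2
    exact (Finset.mem_compl.1 h2) h1
  · exfalso
    have h1 := S.orderEmbOfFin_mem hS ⟨y, hy⟩
    have h2 := Sᶜ.orderEmbOfFin_mem (compl_card hS) ⟨(x:ℕ) - q, by have := x.isLt; omega⟩
    rw [hxy] at h2
    exact (Finset.mem_compl.1 h2) h1
  · have := (Sᶜ.orderEmbOfFin (compl_card hS)).injective hxy
    have := (congrArg Fin.val this : _)
    simp only at this
    exact Fin.ext (by omega)

noncomputable def shuffle (S : Finset (Fin (q+p))) (hS : S.card = q) : Equiv.Perm (Fin (q+p)) :=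
  Equiv.ofBijective _ (Finite.injective_iff_bijective.1 (shuffleFun_inj S hS))

lemma shuffle_apply_castAdd (S : Finset (Fin (q+p))) (hS : S.card = q) (j : Fin q) :
    shuffle S hS (Fin.castAdd p j) = S.orderEmbOfFin hS j := by
  simp only [shuffle, Equiv.ofBijective_apply, shuffleFun]
  rw [dif_pos (by simpa using j.isLt)]
  congr 1

lemma shuffle_apply_natAdd (S : Finset (Fin (q+p))) (hS : S.card = q) (j : Fin p) :
    shuffle S hS (Fin.natAdd q j) = Sᶜ.orderEmbOfFin (compl_card hS) j := by
  simp only [shuffle, Equiv.ofBijective_apply, shuffleFun]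
  rw [dif_neg (by simp)]
  congr 1
  ext; simp

/-! ### sign of the shuffle -/

section sign

variable {S : Finset (Fin (q+p))} {s t : Fin (q+p)}

lemma dc_mem (hcl : ∀ s ∈ S, ∀ t : Fin (q+p), (t:ℕ)+1 = (s:ℕ) → t ∈ S) :
    ∀ s ∈ S, ∀ t : Fin (q+p), t ≤ s → t ∈ S := by
  have key : ∀ (k : ℕ) (s : Fin (q+p)), s ∈ S → ∀ t : Fin (q+p), (t:ℕ) + k = (s:ℕ) → t ∈ S := by
    intro k
    induction k with
    | zero => intro s hs t hts; have : t = s := Fin.ext (by omega); rwa [this]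
    | succ k IH =>
      intro s hs t hts
      have h1 : ((⟨(t:ℕ)+1, by omega⟩ : Fin (q+p)) : ℕ) + k = (s:ℕ) := by simp; omega
      have h2 := IH s hs _ h1
      exact hcl _ h2 t (by simp)
  intro s hs t hts
  exact key ((s:ℕ) - (t:ℕ)) s hs t (by have := Fin.le_iff_val_le_val.1 hts; omega)

lemma closed_eq (hS : S.card = q)
    (hcl : ∀ s ∈ S, ∀ t : Fin (q+p), (t:ℕ)+1 = (s:ℕ) → t ∈ S) :
    S = Finset.image (Fin.castAdd p) Finset.univ := by
  have hlt : ∀ s ∈ S, (s:ℕ) < q := by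
    intro s hs
    by_contra hge
    have hsub : Finset.Iic s ⊆ S := fun t htmem => dc_mem hcl s hs t (Finset.mem_Iic.1 htmem)
    have := Finset.card_le_card hsub
    rw [Fin.card_Iic, hS] at this
    omega
  apply Finset.eq_of_subset_of_card_le
  · intro s hs
    refine Finset.mem_image.2 ⟨⟨(s:ℕ), hlt s hs⟩, Finset.mem_univ _, ?_⟩
    ext; simp
  · rw [Finset.card_image_of_injective _ (Fin.castAdd_injective _ _), hS, Finset.card_univ,
      Fintype.card_fin]

lemma step_card (hS : S.card = q) (hs : s ∈ S) (ht : t ∉ S) :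
    (insert t (S.erase s)).card = q := by
  rw [Finset.card_insert_of_notMem (fun h => ht (Finset.mem_of_mem_erase h)),
    Finset.card_erase_of_mem hs]
  have : 0 < S.card := Finset.card_pos.2 ⟨s, hs⟩
  omega

lemma swap_sorted (hS : S.card = q) (hs : s ∈ S) (ht : t ∉ S) (hts : (t:ℕ)+1 = (s:ℕ)) :
    ∀ j : Fin q, Equiv.swap t s ((insert t (S.erase s)).orderEmbOfFin
      (step_card hS hs ht) j) = S.orderEmbOfFin hS j := by
  have hne : t ≠ s := fun h => by rw [h] at hts; omega
  have hsS' : s ∉ insert t (S.erase s) := by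
    simp only [Finset.mem_insert, Finset.mem_erase]
    push_neg
    exact ⟨hne.symm, fun h => absurd rfl h⟩
  set S' := insert t (S.erase s) with hS'def
  set f := S'.orderEmbOfFin (step_card hS hs ht) with hfdef
  have hmemf : ∀ j, f j ∈ S' := fun j => Finset.orderEmbOfFin_mem _ _ _
  have hmem : ∀ j : Fin q, Equiv.swap t s (f j) ∈ S := by
    intro j
    rcases Finset.mem_insert.1 (hmemf j) with h | h
    · rw [h, Equiv.swap_apply_left]; exact hs
    · have h1 : f j ≠ t := fun hc => ht (Finset.mem_of_mem_erase (hc ▸ h))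
      have h2 : f j ≠ s := fun hc => hsS' (hc ▸ hmemf j)
      rw [Equiv.swap_apply_of_ne_of_ne h1 h2]
      exact Finset.mem_of_mem_erase h
  have hmono : StrictMono (fun j => Equiv.swap t s (f j)) := by
    intro j1 j2 hj
    show Equiv.swap t s (f j1) < Equiv.swap t s (f j2)
    have hflt : f j1 < f j2 := (S'.orderEmbOfFin _).strictMono hj
    have hv1 := hmemf j1; have hv2 := hmemf j2
    have hns1 : f j1 ≠ s := fun hc => hsS' (hc ▸ hv1)
    have hns2 : f j2 ≠ s := fun hc => hsS' (hc ▸ hv2)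
    by_cases h1 : f j1 = t
    · have h2 : f j2 ≠ t := fun hc => absurd (h1.trans hc.symm) (ne_of_lt hflt)
      rw [h1, Equiv.swap_apply_left, Equiv.swap_apply_of_ne_of_ne h2 hns2]
      have hlt2 : (t:ℕ) < (f j2 : ℕ) := by
        have := Fin.lt_iff_val_lt_val.1 hflt; rw [h1] at this; exact this
      have : (f j2 : ℕ) ≠ (s:ℕ) := fun hc => hns2 (Fin.ext hc)
      exact Fin.lt_iff_val_lt_val.2 (by omega)
    · by_cases h2 : f j2 = t
      · rw [h2, Equiv.swap_apply_left, Equiv.swap_apply_of_ne_of_ne h1 hns1]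
        have hlt2 : (f j1:ℕ) < (t:ℕ) := by
          have := Fin.lt_iff_val_lt_val.1 hflt; rw [h2] at this; exact this
        exact Fin.lt_iff_val_lt_val.2 (by omega)
      · rw [Equiv.swap_apply_of_ne_of_ne h1 hns1, Equiv.swap_apply_of_ne_of_ne h2 hns2]
        exact hflt
  have := Finset.orderEmbOfFin_unique hS (f := fun j => Equiv.swap t s (f j)) hmem hmono
  intro j
  exact congrFun this j

lemma swap_sorted_compl (hS : S.card = q) (hs : s ∈ S) (ht : t ∉ S) (hts : (t:ℕ)+1 = (s:ℕ)) :
    ∀ j : Fin p, Equiv.swap t s ((insert t (S.erase s))ᶜ.orderEmbOfFin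
      (compl_card (step_card hS hs ht)) j) = Sᶜ.orderEmbOfFin (compl_card hS) j := by
  have hne : t ≠ s := fun h => by rw [h] at hts; omega
  set S' := insert t (S.erase s) with hS'def
  have htS' : t ∈ S' := Finset.mem_insert_self _ _
  have hsS' : s ∉ S' := by
    simp only [hS'def, Finset.mem_insert, Finset.mem_erase]
    push_neg
    exact ⟨hne.symm, fun h => absurd rfl h⟩
  have hmemS' : ∀ x : Fin (q+p), x ∈ S'ᶜ → x ≠ s → x ∈ Sᶜ := by
    intro x hx hxs
    rw [Finset.mem_compl] at hx ⊢
    intro hxS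
    apply hx
    exact Finset.mem_insert.2 (Or.inr (Finset.mem_erase.2 ⟨hxs, hxS⟩))
  set f := S'ᶜ.orderEmbOfFin (compl_card (step_card hS hs ht)) with hfdef
  have hmemf : ∀ j, f j ∈ S'ᶜ := fun j => Finset.orderEmbOfFin_mem _ _ _
  have hnt : ∀ j, f j ≠ t := fun j hc => (Finset.mem_compl.1 (hc ▸ hmemf j)) htS'
  have hmem : ∀ j : Fin p, Equiv.swap t s (f j) ∈ Sᶜ := by
    intro j
    by_cases h : f j = s
    · rw [h, Equiv.swap_apply_right]; exact Finset.mem_compl.2 ht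
    · rw [Equiv.swap_apply_of_ne_of_ne (hnt j) h]
      exact hmemS' _ (hmemf j) h
  have hmono : StrictMono (fun j => Equiv.swap t s (f j)) := by
    intro j1 j2 hj
    show Equiv.swap t s (f j1) < Equiv.swap t s (f j2)
    have hflt : f j1 < f j2 := (S'ᶜ.orderEmbOfFin _).strictMono hj
    by_cases h1 : f j1 = s
    · rw [h1, Equiv.swap_apply_right]
      have h2 : f j2 ≠ s := fun hc => absurd (h1.trans hc.symm) (ne_of_lt hflt)
      rw [Equiv.swap_apply_of_ne_of_ne (hnt j2) h2]
      have : (s:ℕ) < (f j2:ℕ) := by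
        have := Fin.lt_iff_val_lt_val.1 hflt; rw [h1] at this; exact this
      exact Fin.lt_iff_val_lt_val.2 (by omega)
    · by_cases h2 : f j2 = s
      · rw [h2, Equiv.swap_apply_right, Equiv.swap_apply_of_ne_of_ne (hnt j1) h1]
        have hv : (f j1:ℕ) < (s:ℕ) := by
          have := Fin.lt_iff_val_lt_val.1 hflt; rw [h2] at this; exact this
        have : (f j1:ℕ) ≠ (t:ℕ) := fun hc => (hnt j1) (Fin.ext hc)
        exact Fin.lt_iff_val_lt_val.2 (by omega)
      · rw [Equiv.swap_apply_of_ne_of_ne (hnt j1) h1, Equiv.swap_apply_of_ne_of_ne (hnt j2) h2]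
        exact hflt
  have := Finset.orderEmbOfFin_unique (compl_card hS) (f := fun j => Equiv.swap t s (f j)) hmem hmono
  intro j
  exact congrFun this j

lemma shuffle_eq_swap (hS : S.card = q) (hs : s ∈ S) (ht : t ∉ S) (hts : (t:ℕ)+1 = (s:ℕ)) :
    shuffle S hS = Equiv.swap t s * shuffle (insert t (S.erase s)) (step_card hS hs ht) := by
  apply Equiv.ext
  intro x
  rw [Equiv.Perm.mul_apply]
  show shuffleFun S hS x = Equiv.swap t s (shuffleFun _ _ x)
  unfold shuffleFun
  by_cases h : (x:ℕ) < q
  · rw [dif_pos h, dif_pos h, swap_sorted hS hs ht hts]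
  · rw [dif_neg h, dif_neg h, swap_sorted_compl hS hs ht hts]

lemma sign_shuffle_aux (m : ℕ) : ∀ (S : Finset (Fin (q+p))) (hS : S.card = q),
    (∑ x ∈ S, (x:ℕ)) = m →
    Equiv.Perm.sign (shuffle S hS) = (-1) ^ (m + ∑ j ∈ Finset.range q, j) := by
  induction m using Nat.strong_induction_on with
  | _ m IH =>
    intro S hS hsum
    by_cases hex : ∃ s ∈ S, ∃ t : Fin (q+p), t ∉ S ∧ (t:ℕ)+1 = (s:ℕ)
    · obtain ⟨s, hs, t, ht, hts⟩ := hex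
      have hm' : (∑ x ∈ insert t (S.erase s), (x:ℕ)) + 1 = m := by
        rw [Finset.sum_insert (fun h => ht (Finset.mem_of_mem_erase h))]
        rw [← hsum, ← Finset.add_sum_erase S _ hs]
        omega
      have hne : t ≠ s := fun h => by rw [h] at hts; omega
      rw [shuffle_eq_swap hS hs ht hts, Equiv.Perm.sign_mul, Equiv.Perm.sign_swap hne,
        IH _ (by omega) _ (step_card hS hs ht) rfl]
      rw [show m + ∑ j ∈ Finset.range q, j
          = ((∑ x ∈ insert t (S.erase s), (x:ℕ)) + ∑ j ∈ Finset.range q, j) + 1 by omega,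
        pow_succ]
      exact mul_comm _ _
    · push_neg at hex
      have hcl : ∀ s ∈ S, ∀ t : Fin (q+p), (t:ℕ)+1 = (s:ℕ) → t ∈ S := by
        intro s hs t hts
        by_contra hc
        exact hex s hs t hc hts
      have hSeq := closed_eq hS hcl
      have hid : shuffle S hS = 1 := by
        apply Equiv.ext; intro x
        show shuffleFun S hS x = x
        unfold shuffleFun
        by_cases h : (x:ℕ) < q
        · rw [dif_pos h]
          have hmem : ∀ j : Fin q, (Fin.castAdd p j) ∈ S := by
            intro j; rw [hSeq]; exact Finset.mem_image_of_mem _ (Finset.mem_univ _)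
          have := Finset.orderEmbOfFin_unique hS (f := fun j : Fin q => Fin.castAdd p j) hmem
            (fun a b hab => by
              simp only [Fin.lt_iff_val_lt_val, Fin.coe_castAdd]
              exact Fin.lt_iff_val_lt_val.1 hab)
          rw [← congrFun this ⟨x, h⟩]
          ext; simp
        · rw [dif_neg h]
          have hmem : ∀ j : Fin p, (Fin.natAdd q j) ∈ Sᶜ := by
            intro j; rw [Finset.mem_compl, hSeq]
            intro hc
            obtain ⟨y, _, hy⟩ := Finset.mem_image.1 hc
            have := congrArg Fin.val hy; simp at this; omega
          have := Finset.orderEmbOfFin_unique (compl_card hS)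
            (f := fun j : Fin p => Fin.natAdd q j) hmem
            (fun a b hab => by
              simp only [Fin.lt_iff_val_lt_val, Fin.coe_natAdd]
              have := Fin.lt_iff_val_lt_val.1 hab
              omega)
          rw [← congrFun this ⟨(x:ℕ) - q, by have := x.isLt; omega⟩]
          ext; simp; omega
      rw [hid, Equiv.Perm.sign_one]
      have hms : m = ∑ j ∈ Finset.range q, j := by
        rw [← hsum, hSeq,
          Finset.sum_image (fun a _ b _ hab => Fin.castAdd_injective _ _ hab)]
        simp only [Fin.coe_castAdd]
        exact Fin.sum_univ_eq_sum_range (fun j => j) q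
      rw [hms]
      exact (Even.neg_one_pow ⟨_, rfl⟩).symm

lemma sign_shuffle (S : Finset (Fin (q+p))) (hS : S.card = q) :
    Equiv.Perm.sign (shuffle S hS)
      = (-1) ^ ((∑ x ∈ S, (x:ℕ)) + ∑ j ∈ Finset.range q, j) :=
  sign_shuffle_aux _ S hS rfl

end sign

/-! ### counting lemmas about `orderEmbOfFin` -/

section count

lemma image_oeof {k : ℕ} {T : Finset (Fin (q+p))} (h : T.card = k) :
    Finset.image (T.orderEmbOfFin h) Finset.univ = T := by
  apply Finset.coe_injective
  rw [Finset.coe_image, Finset.coe_univ, Set.image_univ, Finset.range_orderEmbOfFin]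

lemma sum_oeof {k : ℕ} {T : Finset (Fin (q+p))} (h : T.card = k) :
    ∑ j : Fin k, ((T.orderEmbOfFin h j : ℕ)) = ∑ x ∈ T, (x:ℕ) := by
  conv_rhs => rw [← image_oeof h]
  rw [Finset.sum_image (fun a _ b _ hab => (T.orderEmbOfFin h).injective hab)]

lemma card_lt_oeof {k : ℕ} {T : Finset (Fin (q+p))} (h : T.card = k) (i : Fin k) :
    (T.filter (· < T.orderEmbOfFin h i)).card = (i:ℕ) := by
  have key : (Finset.range (i:ℕ)).card = (T.filter (· < T.orderEmbOfFin h i)).card := by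
    apply Finset.card_bij (i := fun (a : ℕ) (ha : a ∈ Finset.range (i:ℕ)) =>
      T.orderEmbOfFin h ⟨a, lt_trans (Finset.mem_range.1 ha) i.isLt⟩)
    · intro a ha
      refine Finset.mem_filter.2 ⟨Finset.orderEmbOfFin_mem _ _ _, ?_⟩
      exact (T.orderEmbOfFin h).strictMono (by
        simp only [Fin.mk_lt_mk, Fin.lt_iff_val_lt_val]
        exact Finset.mem_range.1 ha)
    · intro a ha b hb hab
      have := (T.orderEmbOfFin h).injective hab
      exact congrArg Fin.val this
    · intro x hx
      obtain ⟨hxT, hxlt⟩ := Finset.mem_filter.1 hx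
      have hr : x ∈ Set.range (T.orderEmbOfFin h) := by
        rw [Finset.range_orderEmbOfFin]; exact hxT
      obtain ⟨j, hj⟩ := hr
      have hji : j < i := by
        by_contra hc
        push_neg at hc
        exact absurd (hj ▸ ((T.orderEmbOfFin h).le_iff_le.2 hc)) (not_le.2 hxlt)
      exact ⟨(j:ℕ), Finset.mem_range.2 hji, by rw [← hj]⟩
  rw [← key, Finset.card_range]

lemma oeof_ge {k : ℕ} {T : Finset (Fin (q+p))} (h : T.card = k) (b : Fin k) :
    (b:ℕ) ≤ (T.orderEmbOfFin h b : ℕ) := by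
  have key : ∀ (m : ℕ) (hm : m < k), m ≤ (T.orderEmbOfFin h ⟨m, hm⟩ : ℕ) := by
    intro m
    induction m with
    | zero => intro _; exact Nat.zero_le _
    | succ m IH =>
      intro hm
      have h1 := IH (by omega)
      have h2 : T.orderEmbOfFin h ⟨m, by omega⟩ < T.orderEmbOfFin h ⟨m+1, hm⟩ :=
        (T.orderEmbOfFin h).strictMono (by simp [Fin.lt_iff_val_lt_val])
      have := Fin.lt_iff_val_lt_val.1 h2
      omega
  have := key (b:ℕ) b.isLt
  simpa using this

lemma oeof_gap {k : ℕ} {T : Finset (Fin (q+p))} (h : T.card = k) (b c : Fin k) (hbc : b ≤ c) :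
    (T.orderEmbOfFin h b : ℕ) + ((c:ℕ) - (b:ℕ)) ≤ (T.orderEmbOfFin h c : ℕ) := by
  have key : ∀ (d : ℕ) (b' c' : Fin k), (b':ℕ) + d = (c':ℕ) →
      (T.orderEmbOfFin h b' : ℕ) + d ≤ (T.orderEmbOfFin h c' : ℕ) := by
    intro d
    induction d with
    | zero =>
      intro b' c' hbc'
      have : b' = c' := Fin.ext (by omega)
      rw [this]; omega
    | succ d IH =>
      intro b' c' hbc'
      have hmid : ((⟨(b':ℕ) + d, by have := c'.isLt; omega⟩ : Fin k) : ℕ) = (b':ℕ) + d := rfl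
      have h1 := IH b' ⟨(b':ℕ) + d, by have := c'.isLt; omega⟩ rfl
      have h2 : T.orderEmbOfFin h ⟨(b':ℕ) + d, by have := c'.isLt; omega⟩
          < T.orderEmbOfFin h c' :=
        (T.orderEmbOfFin h).strictMono (by simp only [Fin.lt_iff_val_lt_val]; omega)
      have := Fin.lt_iff_val_lt_val.1 h2
      omega
  have hbc' := Fin.le_iff_val_le_val.1 hbc
  exact key ((c:ℕ) - (b:ℕ)) b c (by omega)

lemma oeof_le {S : Finset (Fin (q+p))} (hS : S.card = q) (b : Fin q) :
    (S.orderEmbOfFin hS b : ℕ) ≤ p + (b:ℕ) := by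
  have hq : 0 < q := b.pos
  have hlast : (S.orderEmbOfFin hS ⟨q-1, by omega⟩ : ℕ) < q + p :=
    (S.orderEmbOfFin hS ⟨q-1, by omega⟩).isLt
  have := oeof_gap hS b ⟨q-1, by omega⟩ (Fin.le_iff_val_le_val.2 (by simp; omega))
  simp only at this
  omega

lemma card_split (S : Finset (Fin (q+p))) (x : Fin (q+p)) :
    (S.filter (· < x)).card + (Sᶜ.filter (· < x)).card = (x:ℕ) := by
  have h1 : S.filter (· < x) = (Finset.univ.filter (· < x)).filter (· ∈ S) := by
    ext y; simp [and_comm]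
  have h2 : Sᶜ.filter (· < x) = (Finset.univ.filter (· < x)).filter (fun y => ¬ y ∈ S) := by
    ext y; simp [and_comm]
  rw [h1, h2, Finset.card_filter_add_card_filter_not]
  rw [show Finset.univ.filter (· < x) = Finset.Iio x by ext y; simp, Fin.card_Iio]

/-- the key counting fact: `#{b | sS b - b ≤ i}` equals `tS i - i`. -/
lemma count_le (S : Finset (Fin (q+p))) (hS : S.card = q) (i : Fin p) :
    ((Finset.univ.filter
        (fun b : Fin q => (S.orderEmbOfFin hS b : ℕ) - (b:ℕ) ≤ (i:ℕ))).card : ℕ)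
      = (Sᶜ.orderEmbOfFin (compl_card hS) i : ℕ) - (i:ℕ) := by
  set f := S.orderEmbOfFin hS with hf
  set g := Sᶜ.orderEmbOfFin (compl_card hS) with hg
  have hci : (Sᶜ.filter (· < g i)).card = (i:ℕ) := card_lt_oeof (compl_card hS) i
  have step1 : Finset.univ.filter (fun b : Fin q => (f b:ℕ) - (b:ℕ) ≤ (i:ℕ))
      = Finset.univ.filter (fun b : Fin q => f b < g i) := by
    ext b
    simp only [Finset.mem_filter, Finset.mem_univ, true_and]
    have hcb : (S.filter (· < f b)).card = (b:ℕ) := card_lt_oeof hS b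
    have hsplit := card_split S (f b)
    have hgeb := oeof_ge hS b
    have hfbS : f b ∈ S := Finset.orderEmbOfFin_mem _ _ _
    have hgiSc : g i ∈ Sᶜ := Finset.orderEmbOfFin_mem _ _ _
    have hne : f b ≠ g i := fun hc => (Finset.mem_compl.1 (hc ▸ hgiSc)) hfbS
    constructor
    · intro hle
      by_contra hc
      push_neg at hc
      have hlt : g i < f b := lt_of_le_of_ne hc (fun hcc => hne hcc.symm)
      have hsub : insert (g i) (Sᶜ.filter (· < g i)) ⊆ Sᶜ.filter (· < f b) := by
        intro y hy
        rcases Finset.mem_insert.1 hy with h | h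
        · rw [h]; exact Finset.mem_filter.2 ⟨hgiSc, hlt⟩
        · obtain ⟨h1, h2⟩ := Finset.mem_filter.1 h
          exact Finset.mem_filter.2 ⟨h1, lt_trans h2 hlt⟩
      have hcard := Finset.card_le_card hsub
      have hins := Finset.card_insert_of_notMem (s := Sᶜ.filter (· < g i)) (a := g i)
        (fun hc2 => absurd (Finset.mem_filter.1 hc2).2 (lt_irrefl _))
      omega
    · intro hlt
      have hsub : Sᶜ.filter (· < f b) ⊆ Sᶜ.filter (· < g i) := by
        intro y hy
        obtain ⟨h1, h2⟩ := Finset.mem_filter.1 hy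
        exact Finset.mem_filter.2 ⟨h1, lt_trans h2 hlt⟩
      have hcard := Finset.card_le_card hsub
      rw [hci] at hcard
      omega
  have step2 : (Finset.univ.filter (fun b : Fin q => f b < g i)).card
      = (S.filter (· < g i)).card := by
    apply Finset.card_bij (i := fun b _ => f b)
    · intro b hb
      exact Finset.mem_filter.2 ⟨Finset.orderEmbOfFin_mem _ _ _,
        (Finset.mem_filter.1 hb).2⟩
    · intro a _ b _ hab
      exact f.injective hab
    · intro x hx
      obtain ⟨hxS, hxlt⟩ := Finset.mem_filter.1 hx
      have hr : x ∈ Set.range f := by rw [hf, Finset.range_orderEmbOfFin]; exact hxS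
      obtain ⟨j, hj⟩ := hr
      exact ⟨j, Finset.mem_filter.2 ⟨Finset.mem_univ _, hj ▸ hxlt⟩, hj⟩
  have step3 := card_split S (g i)
  rw [step1, step2]
  omega

end count

/-! ### Laplace expansion -/

section laplace

variable {R : Type*} [CommRing R]

noncomputable def phi (S : Finset (Fin (q+p))) (hS : S.card = q)
    (z : Equiv.Perm (Fin q) × Equiv.Perm (Fin p)) : Equiv.Perm (Fin (q+p)) :=
  shuffle S hS * Equiv.permCongr finSumFinEquiv (Equiv.sumCongr z.1 z.2)

lemma phi_castAdd (S : Finset (Fin (q+p))) (hS : S.card = q)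
    (z : Equiv.Perm (Fin q) × Equiv.Perm (Fin p)) (j : Fin q) :
    phi S hS z (Fin.castAdd p j) = S.orderEmbOfFin hS (z.1 j) := by
  rw [phi, Equiv.Perm.mul_apply, Equiv.permCongr_apply]
  rw [finSumFinEquiv_symm_apply_castAdd]
  simp only [Equiv.sumCongr_apply, Sum.map_inl, finSumFinEquiv_apply_left]
  exact shuffle_apply_castAdd S hS _

lemma phi_natAdd (S : Finset (Fin (q+p))) (hS : S.card = q)
    (z : Equiv.Perm (Fin q) × Equiv.Perm (Fin p)) (j : Fin p) :
    phi S hS z (Fin.natAdd q j) = Sᶜ.orderEmbOfFin (compl_card hS) (z.2 j) := by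
  rw [phi, Equiv.Perm.mul_apply, Equiv.permCongr_apply]
  rw [finSumFinEquiv_symm_apply_natAdd]
  simp only [Equiv.sumCongr_apply, Sum.map_inr, finSumFinEquiv_apply_right]
  exact shuffle_apply_natAdd S hS _

lemma sign_phi (S : Finset (Fin (q+p))) (hS : S.card = q)
    (z : Equiv.Perm (Fin q) × Equiv.Perm (Fin p)) :
    Equiv.Perm.sign (phi S hS z)
      = Equiv.Perm.sign (shuffle S hS) * Equiv.Perm.sign z.1 * Equiv.Perm.sign z.2 := by
  rw [phi, Equiv.Perm.sign_mul, Equiv.Perm.sign_permCongr, Equiv.Perm.sign_sumCongr, mul_assoc]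

lemma fiber_sum (A : Matrix (Fin (q+p)) (Fin (q+p)) R) (S : Finset (Fin (q+p)))
    (hS : S.card = q) :
    ∑ σ ∈ Finset.univ.filter (fun σ : Equiv.Perm (Fin (q+p)) =>
        Finset.image (fun j : Fin q => σ (Fin.castAdd p j)) Finset.univ = S),
      ((Equiv.Perm.sign σ : ℤ) : R) * ∏ i, A (σ i) i
    = ((Equiv.Perm.sign (shuffle S hS) : ℤ) : R)
        * (Matrix.det (fun i j : Fin q => A (S.orderEmbOfFin hS i) (Fin.castAdd p j)))
        * (Matrix.det (fun i j : Fin p =>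
            A (Sᶜ.orderEmbOfFin (compl_card hS) i) (Fin.natAdd q j))) := by
  have himg : ∀ z : Equiv.Perm (Fin q) × Equiv.Perm (Fin p),
      Finset.image (fun j : Fin q => phi S hS z (Fin.castAdd p j)) Finset.univ = S := by
    intro z
    ext x
    simp only [Finset.mem_image, Finset.mem_univ, true_and]
    constructor
    · rintro ⟨j, rfl⟩
      rw [phi_castAdd]
      exact Finset.orderEmbOfFin_mem _ _ _
    · intro hx
      have : x ∈ Set.range (S.orderEmbOfFin hS) := by
        rw [Finset.range_orderEmbOfFin]; exact hx
      obtain ⟨j, hj⟩ := this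
      exact ⟨z.1.symm j, by rw [phi_castAdd]; simp [hj]⟩
  have lhs_eq : ∑ σ ∈ Finset.univ.filter (fun σ : Equiv.Perm (Fin (q+p)) =>
        Finset.image (fun j : Fin q => σ (Fin.castAdd p j)) Finset.univ = S),
      ((Equiv.Perm.sign σ : ℤ) : R) * ∏ i, A (σ i) i
      = ∑ z : Equiv.Perm (Fin q) × Equiv.Perm (Fin p),
        ((Equiv.Perm.sign (phi S hS z) : ℤ) : R) * ∏ i, A (phi S hS z i) i := by
    symm
    apply Finset.sum_bij (i := fun z _ => phi S hS z)
    · intro z _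
      exact Finset.mem_filter.2 ⟨Finset.mem_univ _, himg z⟩
    · intro z _ z' _ hzz
      have h2 : Equiv.sumCongr z.1 z.2 = Equiv.sumCongr z'.1 z'.2 :=
        (Equiv.permCongr finSumFinEquiv).injective (mul_left_cancel hzz)
      have h1 : z.1 = z'.1 := by
        apply Equiv.ext; intro j
        have h3 := congrArg (fun e : Equiv.Perm (Fin q ⊕ Fin p) => e (Sum.inl j)) h2
        simpa using h3
      have h4 : z.2 = z'.2 := by
        apply Equiv.ext; intro j
        have h3 := congrArg (fun e : Equiv.Perm (Fin q ⊕ Fin p) => e (Sum.inr j)) h2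
        simpa using h3
      exact Prod.ext h1 h4
    · intro σ hσ
      have himgσ : Finset.image (fun j : Fin q => σ (Fin.castAdd p j)) Finset.univ = S :=
        (Finset.mem_filter.1 hσ).2
      set τ := (shuffle S hS)⁻¹ * σ with hτ
      have hval1 : ∀ j : Fin q, (τ (Fin.castAdd p j) : ℕ) < q := by
        intro j
        have hmem : σ (Fin.castAdd p j) ∈ S := by
          rw [← himgσ]; exact Finset.mem_image_of_mem _ (Finset.mem_univ _)
        have : σ (Fin.castAdd p j) ∈ Set.range (S.orderEmbOfFin hS) := by
          rw [Finset.range_orderEmbOfFin]; exact hmem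
        obtain ⟨j', hj'⟩ := this
        have heq : τ (Fin.castAdd p j) = Fin.castAdd p j' := by
          rw [hτ, Equiv.Perm.mul_apply, ← hj', ← shuffle_apply_castAdd S hS j',
            Equiv.Perm.inv_def, Equiv.symm_apply_apply]
        rw [heq]
        simpa using j'.isLt
      have hg1inj : Function.Injective
          (fun j : Fin q => (⟨(τ (Fin.castAdd p j) : ℕ), hval1 j⟩ : Fin q)) := by
        intro a b hab
        simp only [Fin.mk.injEq] at hab
        have : τ (Fin.castAdd p a) = τ (Fin.castAdd p b) := Fin.ext hab
        have := τ.injective this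
        have := congrArg Fin.val this
        simp only [Fin.coe_castAdd] at this
        exact Fin.ext this
      set σ₁ : Equiv.Perm (Fin q) :=
        Equiv.ofBijective _ (Finite.injective_iff_bijective.1 hg1inj) with hσ₁
      have hval2 : ∀ j : Fin p, q ≤ (τ (Fin.natAdd q j) : ℕ) := by
        intro j
        by_contra hc
        push_neg at hc
        obtain ⟨x, hx⟩ := σ₁.surjective ⟨_, hc⟩
        have hx'' := congrArg Fin.val hx
        have : Fin.castAdd p x = Fin.natAdd q j := τ.injective (Fin.ext (by exact hx''))
        have := congrArg Fin.val this
        simp only [Fin.coe_castAdd, Fin.coe_natAdd] at this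
        have := x.isLt
        omega
      have hg2inj : Function.Injective (fun j : Fin p =>
          (⟨(τ (Fin.natAdd q j) : ℕ) - q,
            by have := (τ (Fin.natAdd q j)).isLt; have := hval2 j; omega⟩ : Fin p)) := by
        intro a b hab
        simp only [Fin.mk.injEq] at hab
        have h1 := hval2 a; have h2 := hval2 b
        have : τ (Fin.natAdd q a) = τ (Fin.natAdd q b) := Fin.ext (by omega)
        have := τ.injective this
        have := congrArg Fin.val this
        simp only [Fin.coe_natAdd] at this
        exact Fin.ext (by omega)
      set σ₂ : Equiv.Perm (Fin p) :=
        Equiv.ofBijective _ (Finite.injective_iff_bijective.1 hg2inj) with hσ₂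
      refine ⟨(σ₁, σ₂), Finset.mem_univ _, ?_⟩
      have hperm : Equiv.permCongr finSumFinEquiv (Equiv.sumCongr σ₁ σ₂) = τ := by
        apply Equiv.ext
        intro x
        obtain ⟨y, rfl⟩ := finSumFinEquiv.surjective x
        cases y with
        | inl j =>
          rw [Equiv.permCongr_apply, Equiv.symm_apply_apply]
          simp only [Equiv.sumCongr_apply, Sum.map_inl, finSumFinEquiv_apply_left]
          exact Fin.ext rfl
        | inr j =>
          rw [Equiv.permCongr_apply, Equiv.symm_apply_apply]
          simp only [Equiv.sumCongr_apply, Sum.map_inr, finSumFinEquiv_apply_right]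
          apply Fin.ext
          simp only [Fin.coe_natAdd]
          have := hval2 j
          show q + ((τ (Fin.natAdd q j) : ℕ) - q) = _
          omega
      show phi S hS (σ₁, σ₂) = σ
      rw [phi, hperm, hτ, mul_inv_cancel_left]
    · intro z _; rfl
  rw [lhs_eq]; erw [Matrix.det_apply', Matrix.det_apply']
  rw [Fintype.sum_prod_type]
  rw [mul_assoc, Finset.sum_mul_sum, Finset.mul_sum]
  simp_rw [Finset.mul_sum]
  refine Finset.sum_congr rfl (fun σ₁ _ => Finset.sum_congr rfl (fun σ₂ _ => ?_))
  have hsign := sign_phi S hS (σ₁, σ₂)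
  have hprod : ∏ i, A (phi S hS (σ₁, σ₂) i) i
      = (∏ j : Fin q, A (S.orderEmbOfFin hS (σ₁ j)) (Fin.castAdd p j))
        * ∏ j : Fin p, A (Sᶜ.orderEmbOfFin (compl_card hS) (σ₂ j)) (Fin.natAdd q j) := by
    rw [Fin.prod_univ_add (f := fun i => A (phi S hS (σ₁, σ₂) i) i)]
    congr 1
    · exact Finset.prod_congr rfl (fun j _ => by rw [phi_castAdd])
    · exact Finset.prod_congr rfl (fun j _ => by rw [phi_natAdd])
  rw [hprod, hsign]
  push_cast
  ring

noncomputable def shuffleT (S : Finset (Fin (q+p))) : Equiv.Perm (Fin (q+p)) :=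
  if h : S.card = q then shuffle S h else 1

noncomputable def sFun (S : Finset (Fin (q+p))) : Fin q → Fin (q+p) :=
  fun j => if h : S.card = q then S.orderEmbOfFin h j else ⟨0, by have := j.isLt; omega⟩

noncomputable def tFun (S : Finset (Fin (q+p))) : Fin p → Fin (q+p) :=
  fun j => if h : S.card = q then Sᶜ.orderEmbOfFin (compl_card h) j
    else ⟨0, by have := j.isLt; omega⟩

lemma laplace (A : Matrix (Fin (q+p)) (Fin (q+p)) R) :
    A.det = ∑ S ∈ Finset.powersetCard q (Finset.univ : Finset (Fin (q+p))),
      ((Equiv.Perm.sign (shuffleT S) : ℤ) : R)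
        * (Matrix.det (fun i j : Fin q => A (sFun S i) (Fin.castAdd p j)))
        * (Matrix.det (fun i j : Fin p => A (tFun S i) (Fin.natAdd q j))) := by
  rw [Matrix.det_apply']
  rw [← Finset.sum_fiberwise_of_maps_to (g := fun σ : Equiv.Perm (Fin (q+p)) =>
        Finset.image (fun j : Fin q => σ (Fin.castAdd p j)) Finset.univ)
        (t := Finset.powersetCard q Finset.univ)
        (fun σ _ => Finset.mem_powersetCard_univ.2 (by
          rw [Finset.card_image_of_injective _
            (fun a b hab => (Fin.castAdd_injective _ _) (σ.injective hab)),
            Finset.card_univ, Fintype.card_fin]))]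
  refine Finset.sum_congr rfl (fun S hSmem => ?_)
  have hS : S.card = q := Finset.mem_powersetCard_univ.1 hSmem
  rw [fiber_sum A S hS]
  rw [shuffleT, dif_pos hS]
  congr 2
  · congr 1
    funext i j
    rw [sFun, dif_pos hS]
  · congr 1
    funext i j
    rw [tFun, dif_pos hS]
end laplace

/-! ### the bijection between q-subsets and partitions in the q×p box -/

section bij

def deltaFun (γ : Fin q → Fin (p+1)) : Fin q → Fin (q+p) :=
  fun b => ⟨(γ b.rev : ℕ) + (b:ℕ), by have := (γ b.rev).isLt; have := b.isLt; omega⟩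

lemma deltaFun_strictMono (γ : Fin q → Fin (p+1))
    (hγ : ∀ a b : Fin q, a ≤ b → (γ b:ℕ) ≤ (γ a:ℕ)) : StrictMono (deltaFun γ) := by
  intro a b hab
  have h1 : b.rev ≤ a.rev := Fin.rev_le_rev.2 (le_of_lt hab)
  have h2 := hγ _ _ h1
  simp only [deltaFun, Fin.lt_iff_val_lt_val]
  have := Fin.lt_iff_val_lt_val.1 hab
  omega

def DeltaMap (γ : Fin q → Fin (p+1)) : Finset (Fin (q+p)) :=
  Finset.image (deltaFun γ) Finset.univ

lemma DeltaMap_card (γ : Fin q → Fin (p+1))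
    (hγ : ∀ a b : Fin q, a ≤ b → (γ b:ℕ) ≤ (γ a:ℕ)) : (DeltaMap γ).card = q := by
  rw [DeltaMap, Finset.card_image_of_injective _ (deltaFun_strictMono γ hγ).injective,
    Finset.card_univ, Fintype.card_fin]

noncomputable def GammaMap (S : Finset (Fin (q+p))) : Fin q → Fin (p+1) :=
  fun a => if h : S.card = q then
      ⟨(S.orderEmbOfFin h a.rev : ℕ) - ((a.rev : Fin q):ℕ), by
        have := oeof_le h a.rev; omega⟩
    else ⟨0, by omega⟩

lemma GammaMap_val {S : Finset (Fin (q+p))} (hS : S.card = q) (a : Fin q) :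
    (GammaMap S a : ℕ) = (S.orderEmbOfFin hS a.rev : ℕ) - ((a.rev : Fin q):ℕ) := by
  rw [GammaMap, dif_pos hS]

lemma GammaMap_antitone {S : Finset (Fin (q+p))} (hS : S.card = q) :
    ∀ a b : Fin q, a ≤ b → (GammaMap S b : ℕ) ≤ (GammaMap S a : ℕ) := by
  intro a b hab
  rw [GammaMap_val hS, GammaMap_val hS]
  have h1 : b.rev ≤ a.rev := Fin.rev_le_rev.2 hab
  have h2 := oeof_gap hS b.rev a.rev h1
  have h3 := oeof_ge hS b.rev
  have h4 := Fin.le_iff_val_le_val.1 h1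
  omega

lemma DeltaMap_GammaMap {S : Finset (Fin (q+p))} (hS : S.card = q) :
    DeltaMap (GammaMap S) = S := by
  rw [DeltaMap]
  rw [Finset.image_congr (g := fun b : Fin q => S.orderEmbOfFin hS b) (fun b _ => by
    apply Fin.ext
    show (GammaMap S b.rev : ℕ) + (b:ℕ) = ((S.orderEmbOfFin hS b : Fin (q+p)) : ℕ)
    rw [GammaMap_val hS, Fin.rev_rev]
    have := oeof_ge hS b
    omega)]
  exact image_oeof hS

lemma GammaMap_DeltaMap (γ : Fin q → Fin (p+1))
    (hγ : ∀ a b : Fin q, a ≤ b → (γ b:ℕ) ≤ (γ a:ℕ)) :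
    GammaMap (DeltaMap γ) = γ := by
  have hcard := DeltaMap_card γ hγ
  have hemb : ∀ b : Fin q, (DeltaMap γ).orderEmbOfFin hcard b = deltaFun γ b := by
    intro b
    exact (congrFun (Finset.orderEmbOfFin_unique hcard
      (fun x => Finset.mem_image_of_mem _ (Finset.mem_univ x))
      (deltaFun_strictMono γ hγ)) b).symm
  funext a
  apply Fin.ext
  rw [GammaMap_val hcard, hemb a.rev]
  show ((γ a.rev.rev : ℕ) + ((a.rev : Fin q):ℕ)) - ((a.rev : Fin q):ℕ) = (γ a : ℕ)
  rw [Fin.rev_rev]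
  omega

end bij

lemma units_neg_one_pow_cast {R : Type*} [CommRing R] (e : ℕ) :
    ((((-1 : ℤˣ)^e : ℤˣ) : ℤ) : R) = (-1 : R)^e := by push_cast; ring

end DetCompAux

open DetCompAux in
theorem det_composite_eq_sum_skew_jacobiTrudi
    (R : Type*) [CommRing R] (p q : ℕ)
    (h hbar : ℤ → R)
    (hneg : ∀ k : ℤ, k < 0 → h k = 0 ∧ hbar k = 0)
    (h0 : h 0 = 1 ∧ hbar 0 = 1)
    (lam : Fin p → ℕ) (hlam : ∀ i j : Fin p, i ≤ j → lam j ≤ lam i)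
    (mu : Fin q → ℕ) (hmu : ∀ i j : Fin q, i ≤ j → mu j ≤ mu i) :
    -- the matrix M|L (0-indexed)
    let ML : Matrix (Fin (p + q)) (Fin (p + q)) R := fun i j =>
      if hj : (j : ℕ) < q then
        hbar (((mu ⟨q - 1 - (j : ℕ), by omega⟩ : ℕ) : ℤ) + (j : ℕ) - (i : ℕ))
      else
        h (((lam ⟨(j : ℕ) - q, by omega⟩ : ℕ) : ℤ) + (i : ℕ) - q - (((j : ℕ) - q : ℕ) : ℤ))
    Matrix.det ML =
      ∑ γ : Fin q → Fin (p + 1),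
        if (∀ a b : Fin q, a ≤ b → (γ b : ℕ) ≤ (γ a : ℕ)) then
          ((-1 : R) ^ (∑ a : Fin q, (γ a : ℕ))) *
            -- s_{μ/γ}[h̄]
            (Matrix.det (fun i j : Fin q =>
              hbar (((mu j : ℕ) : ℤ) - ((γ i : ℕ) : ℤ) - (j : ℕ) + (i : ℕ)))) *
            -- s_{λ/γᵀ}[h], with γᵀ the conjugate of γ
            (Matrix.det (fun i j : Fin p =>
              h (((lam j : ℕ) : ℤ)
                - ((Finset.univ.filter (fun a : Fin q => (i : ℕ) + 1 ≤ (γ a : ℕ))).card : ℤ)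
                - (j : ℕ) + (i : ℕ))))
        else 0 := by
  intro ML
  have hqp : q + p = p + q := Nat.add_comm q p
  have hdet : Matrix.det ML
      = Matrix.det (ML.submatrix (finCongr hqp) (finCongr hqp)) :=
    (Matrix.det_submatrix_equiv_self (finCongr hqp) ML).symm
  rw [hdet, DetCompAux.laplace]
  rw [← Finset.sum_filter]
  have hmuc : ∀ (a b : Fin q), (a:ℕ) = (b:ℕ) → mu a = mu b :=
    fun a b hab => by rw [Fin.ext hab]
  have hlamc : ∀ (a b : Fin p), (a:ℕ) = (b:ℕ) → lam a = lam b :=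
    fun a b hab => by rw [Fin.ext hab]
  refine Finset.sum_nbij' (fun S => GammaMap S) (fun γ => DeltaMap γ) ?_ ?_ ?_ ?_ ?_
  · intro S hSmem
    exact Finset.mem_filter.2 ⟨Finset.mem_univ _,
      GammaMap_antitone (Finset.mem_powersetCard_univ.1 hSmem)⟩
  · intro γ hγ
    exact Finset.mem_powersetCard_univ.2 (DeltaMap_card γ (Finset.mem_filter.1 hγ).2)
  · intro S hSmem
    exact DeltaMap_GammaMap (Finset.mem_powersetCard_univ.1 hSmem)
  · intro γ hγ
    exact GammaMap_DeltaMap γ (Finset.mem_filter.1 hγ).2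
  · intro S hSmem
    have hS : S.card = q := Finset.mem_powersetCard_univ.1 hSmem
    -- the sign factor
    have hsign : ((Equiv.Perm.sign (shuffleT S) : ℤ) : R)
        = (-1 : R) ^ (∑ a : Fin q, (GammaMap S a : ℕ)) := by
      rw [shuffleT, dif_pos hS, sign_shuffle S hS, units_neg_one_pow_cast]
      have hsum1 : ∑ a : Fin q, (GammaMap S a : ℕ)
          = ∑ b : Fin q, ((S.orderEmbOfFin hS b : ℕ) - (b:ℕ)) := by
        calc ∑ a : Fin q, (GammaMap S a : ℕ)
            = ∑ a : Fin q, ((S.orderEmbOfFin hS (Fin.revPerm a) : ℕ)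
                - ((Fin.revPerm a : Fin q):ℕ)) :=
              Finset.sum_congr rfl (fun a _ => by rw [GammaMap_val hS]; rfl)
          _ = _ := Equiv.sum_comp Fin.revPerm
                (fun b : Fin q => (S.orderEmbOfFin hS b : ℕ) - (b:ℕ))
      have hsum2 : (∑ x ∈ S, (x:ℕ)) + (∑ j ∈ Finset.range q, j)
          = (∑ b : Fin q, ((S.orderEmbOfFin hS b : ℕ) - (b:ℕ)))
            + 2 * ∑ j ∈ Finset.range q, j := by
        have h1 : ∑ b : Fin q, (S.orderEmbOfFin hS b : ℕ)
            = ∑ b : Fin q, (((S.orderEmbOfFin hS b:ℕ) - (b:ℕ)) + (b:ℕ)) :=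
          Finset.sum_congr rfl (fun b _ => by have := oeof_ge hS b; omega)
        rw [← sum_oeof hS, h1, Finset.sum_add_distrib,
          Fin.sum_univ_eq_sum_range (fun j => j) q]
        ring
      rw [hsum2, hsum1, pow_add, pow_mul, neg_one_sq, one_pow, mul_one]
    -- the M-block minor
    have hMdet : Matrix.det (fun i j : Fin q =>
          (ML.submatrix (finCongr hqp) (finCongr hqp)) (sFun S i) (Fin.castAdd p j))
        = Matrix.det (fun i j : Fin q =>
            hbar (((mu j : ℕ) : ℤ) - (((GammaMap S) i : ℕ) : ℤ) - (j : ℕ) + (i : ℕ))) := by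
      have hM : (fun i j : Fin q =>
            (ML.submatrix (finCongr hqp) (finCongr hqp)) (sFun S i) (Fin.castAdd p j))
          = Matrix.submatrix (Matrix.of fun i j : Fin q =>
              hbar (((mu j : ℕ) : ℤ) - (((GammaMap S) i : ℕ) : ℤ) - (j : ℕ) + (i : ℕ)))
              (⇑(Fin.revPerm : Equiv.Perm (Fin q))) ⇑(Fin.revPerm : Equiv.Perm (Fin q)) := by
        funext i j
        simp only [Matrix.submatrix_apply, Matrix.of_apply, Fin.revPerm_apply, sFun, dif_pos hS]
        simp only [ML]
        rw [dif_pos (show ((finCongr hqp (Fin.castAdd p j) : Fin (p+q)) : ℕ) < q by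
          simpa using j.isLt)]
        rw [hmuc _ (Fin.rev j) (by
          simp only [finCongr_apply, Fin.coe_cast, Fin.coe_castAdd, Fin.val_rev]
          have := j.isLt
          omega)]
        rw [GammaMap_val hS, Fin.rev_rev]
        congr 1
        have h1 := oeof_ge hS i
        have h2 : ((finCongr hqp (S.orderEmbOfFin hS i) : Fin (p+q)) : ℕ)
            = (S.orderEmbOfFin hS i : ℕ) := by simp
        have h3 : ((finCongr hqp (Fin.castAdd p j) : Fin (p+q)) : ℕ) = (j:ℕ) := by simp
        have h4 := Fin.val_rev j
        have h5 := Fin.val_rev i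
        have := j.isLt
        have := i.isLt
        omega
      rw [hM, Matrix.det_submatrix_equiv_self]; rfl
    -- the L-block minor
    have hLdet : Matrix.det (fun i j : Fin p =>
          (ML.submatrix (finCongr hqp) (finCongr hqp)) (tFun S i) (Fin.natAdd q j))
        = Matrix.det (fun i j : Fin p =>
            h (((lam j : ℕ) : ℤ)
              - ((Finset.univ.filter
                  (fun a : Fin q => (i : ℕ) + 1 ≤ ((GammaMap S) a : ℕ))).card : ℤ)
              - (j : ℕ) + (i : ℕ))) := by
      congr 1
      funext i j
      -- counting fact
      have hcount := count_le S hS i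
      have hre : (Finset.univ.filter
            (fun a : Fin q => (i:ℕ)+1 ≤ (GammaMap S a:ℕ))).card
          = (Finset.univ.filter
            (fun b : Fin q => (i:ℕ)+1 ≤ (S.orderEmbOfFin hS b:ℕ) - (b:ℕ))).card := by
        apply Finset.card_bij' (i := fun a _ => Fin.rev a) (j := fun b _ => Fin.rev b)
        · intro a ha
          refine Finset.mem_filter.2 ⟨Finset.mem_univ _, ?_⟩
          have := (Finset.mem_filter.1 ha).2
          rwa [GammaMap_val hS] at this
        · intro b hb
          refine Finset.mem_filter.2 ⟨Finset.mem_univ _, ?_⟩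
          rw [GammaMap_val hS, Fin.rev_rev]
          exact (Finset.mem_filter.1 hb).2
        · intro a _; exact Fin.rev_rev a
        · intro b _; exact Fin.rev_rev b
      have hpart := Finset.card_filter_add_card_filter_not
        (s := (Finset.univ : Finset (Fin q)))
        (p := fun b : Fin q => (S.orderEmbOfFin hS b:ℕ) - (b:ℕ) ≤ (i:ℕ))
      have hneq : Finset.univ.filter
            (fun b : Fin q => ¬ ((S.orderEmbOfFin hS b:ℕ) - (b:ℕ) ≤ (i:ℕ)))
          = Finset.univ.filter
            (fun b : Fin q => (i:ℕ)+1 ≤ (S.orderEmbOfFin hS b:ℕ) - (b:ℕ)) := by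
        ext b; simp only [Finset.mem_filter, Finset.mem_univ, true_and]; omega
      rw [hneq] at hpart
      have hcu : (Finset.univ : Finset (Fin q)).card = q := by
        rw [Finset.card_univ, Fintype.card_fin]
      have hgege := oeof_ge (compl_card hS) i
      have hgel : ((Sᶜ.orderEmbOfFin (compl_card hS) i : Fin (q+p)) : ℕ) < q + p :=
        (Sᶜ.orderEmbOfFin (compl_card hS) i).isLt
      have hle2 : ((Finset.univ.filter
          (fun b : Fin q => (S.orderEmbOfFin hS b:ℕ) - (b:ℕ) ≤ (i:ℕ))).card) ≤ q := by
        calc _ ≤ (Finset.univ : Finset (Fin q)).card := Finset.card_filter_le _ _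
          _ = q := hcu
      -- entry computation
      simp only [Matrix.submatrix_apply, tFun, dif_pos hS]
      simp only [ML]
      rw [dif_neg (show ¬ ((finCongr hqp (Fin.natAdd q j) : Fin (p+q)) : ℕ) < q by simp)]
      rw [hlamc _ j (by simp)]
      congr 1
      have h2 : ((finCongr hqp (Sᶜ.orderEmbOfFin (compl_card hS) i) : Fin (p+q)) : ℕ)
          = (Sᶜ.orderEmbOfFin (compl_card hS) i : ℕ) := by simp
      have h3 : ((finCongr hqp (Fin.natAdd q j) : Fin (p+q)) : ℕ) = q + (j:ℕ) := by simp; omega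
      have := j.isLt
      have := i.isLt
      omega
    rw [hsign, hMdet, hLdet]
end

section
/- Let V be a finite-dimensional complex vector space, and let E, F be complex vector spaces with dim E + dim F ≤ dim V. In the coordinate ring of W = Hom(E,V) × Hom(V,F), the entries of the composition g∘f (where f: E → V and g: V → F are the tautological maps) form a regular sequence of length (dim E)(dim F); equivalently, the Koszul complex on the space of generators E ⊗ F* resolves the quotient ring. -/
/-!
STATEMENT 13: Let `V` be a finite-dimensional complex vector space and `E, F` vector spaces
with `dim E + dim F ≤ dim V`.  In the coordinate ring of `W = Hom(E,V) × Hom(V,F)`, the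
entries of the composition `g ∘ f` (with `f : E → V`, `g : V → F` the tautological maps)
form a regular sequence of length `(dim E)(dim F)`; equivalently, the Koszul complex on the
space of generators `E ⊗ F*` resolves the quotient ring.
-/

open MvPolynomial Finset

namespace RegSeqAux

variable {σ R : Type*} [CommRing R]

/-- `Bel w n p`: every monomial of `p` has weight `< n`. -/
def Bel (w : σ → ℤ) (n : ℤ) (p : MvPolynomial σ R) : Prop :=
  ∀ d : σ →₀ ℕ, n ≤ Finsupp.weight w d → MvPolynomial.coeff d p = 0

variable {w : σ → ℤ}

lemma Bel.mono {n n' : ℤ} {p : MvPolynomial σ R} (h : Bel w n p) (hn : n ≤ n') : Bel w n' p :=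
  fun d hd => h d (hn.trans hd)

lemma bel_zero (n : ℤ) : Bel w n (0 : MvPolynomial σ R) := fun _ _ => coeff_zero _

lemma Bel.add {n : ℤ} {p q : MvPolynomial σ R} (hp : Bel w n p) (hq : Bel w n q) :
    Bel w n (p + q) := fun d hd => by
  rw [coeff_add, hp d hd, hq d hd, add_zero]

lemma Bel.neg {n : ℤ} {p : MvPolynomial σ R} (hp : Bel w n p) : Bel w n (-p) := fun d hd => by
  rw [coeff_neg, hp d hd, neg_zero]

lemma Bel.sub {n : ℤ} {p q : MvPolynomial σ R} (hp : Bel w n p) (hq : Bel w n q) :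
    Bel w n (p - q) := by
  rw [sub_eq_add_neg]; exact hp.add hq.neg

lemma bel_sum {ι : Type*} {s : Finset ι} {n : ℤ} {g : ι → MvPolynomial σ R}
    (h : ∀ i ∈ s, Bel w n (g i)) : Bel w n (∑ i ∈ s, g i) := fun d hd => by
  rw [coeff_sum]
  exact Finset.sum_eq_zero fun i hi => h i hi d hd

lemma weight_nonneg (hw : ∀ s, 0 ≤ w s) (d : σ →₀ ℕ) : 0 ≤ Finsupp.weight w d := by
  rw [Finsupp.weight_apply, Finsupp.sum]
  refine Finset.sum_nonneg fun s _ => ?_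
  have := hw s
  positivity

lemma Bel.eq_zero (hw : ∀ s, 0 ≤ w s) {n : ℤ} {p : MvPolynomial σ R} (h : Bel w n p)
    (hn : n ≤ 0) : p = 0 := by
  ext d
  rw [coeff_zero]
  exact h d (hn.trans (weight_nonneg hw d))

lemma IsWeightedHomogeneous.bel {m n : ℤ} {p : MvPolynomial σ R}
    (h : IsWeightedHomogeneous w p m) (hmn : m < n) : Bel w n p := by
  intro d hd
  by_contra hc
  rw [h hc] at hd
  omega

lemma Bel.mul_homog {a e : ℤ} {p F : MvPolynomial σ R} (hp : Bel w a p)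
    (hF : IsWeightedHomogeneous w F e) : Bel w (a + e) (p * F) := by
  classical
  intro d hd
  rw [coeff_mul]
  apply Finset.sum_eq_zero
  rintro ⟨x, y⟩ hxy
  rw [Finset.HasAntidiagonal.mem_antidiagonal] at hxy
  by_cases hy : coeff y F = 0
  · rw [hy, mul_zero]
  by_cases hx : coeff x p = 0
  · rw [hx, zero_mul]
  exfalso
  have hwy : Finsupp.weight w y = e := hF hy
  have hwx : Finsupp.weight w x < a := by
    by_contra hc
    exact hx (hp x (le_of_not_gt hc))
  have : Finsupp.weight w d = Finsupp.weight w x + Finsupp.weight w y := by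
    rw [← hxy, map_add]
  omega

lemma Bel.mul {a b : ℤ} {p q : MvPolynomial σ R} (hp : Bel w a p) (hq : Bel w b q) :
    Bel w (a + b - 1) (p * q) := by
  classical
  intro d hd
  rw [coeff_mul]
  apply Finset.sum_eq_zero
  rintro ⟨x, y⟩ hxy
  rw [Finset.HasAntidiagonal.mem_antidiagonal] at hxy
  by_cases hy : coeff y q = 0
  · rw [hy, mul_zero]
  by_cases hx : coeff x p = 0
  · rw [hx, zero_mul]
  exfalso
  have hwy : Finsupp.weight w y < b := by
    by_contra hc; exact hy (hq y (le_of_not_gt hc))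
  have hwx : Finsupp.weight w x < a := by
    by_contra hc; exact hx (hp x (le_of_not_gt hc))
  have : Finsupp.weight w d = Finsupp.weight w x + Finsupp.weight w y := by
    rw [← hxy, map_add]
  omega

lemma exists_bel (p : MvPolynomial σ R) : ∃ n : ℤ, Bel w n p := by
  classical
  refine ⟨(p.support.sup fun d => (Finsupp.weight w d).toNat + 1 : ℕ) + 1, ?_⟩
  intro d hd
  by_contra hc
  have hmem : d ∈ p.support := by rwa [MvPolynomial.mem_support_iff]
  have hle : ((Finsupp.weight w d).toNat + 1 : ℕ) ≤
      p.support.sup fun d => (Finsupp.weight w d).toNat + 1 :=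
    Finset.le_sup (f := fun d => (Finsupp.weight w d).toNat + 1) hmem
  have : Finsupp.weight w d ≤ (Finsupp.weight w d).toNat := Int.self_le_toNat _
  omega



local notation "comp" => weightedHomogeneousComponent w

lemma comp_eq_zero_of_bel {n k : ℤ} {p : MvPolynomial σ R} (h : Bel w n p) (hk : n ≤ k) :
    comp k p = 0 := by
  classical
  ext d
  rw [coeff_weightedHomogeneousComponent, coeff_zero]
  split_ifs with hd
  · exact h d (hd ▸ hk)
  · rfl

lemma bel_sub_comp {k : ℤ} {p : MvPolynomial σ R} (h : Bel w (k + 1) p) :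
    Bel w k (p - comp k p) := by
  classical
  intro d hd
  rw [coeff_sub, coeff_weightedHomogeneousComponent]
  rcases eq_or_lt_of_le hd with hd' | hd'
  · rw [if_pos hd'.symm, sub_self]
  · rw [if_neg (by omega), sub_zero]
    exact h d (by omega)

lemma comp_mul_homog {k e : ℤ} {p F : MvPolynomial σ R} (hF : IsWeightedHomogeneous w F e) :
    comp k (p * F) = comp (k - e) p * F := by
  classical
  ext d
  rw [coeff_weightedHomogeneousComponent, coeff_mul, coeff_mul]
  have : (if Finsupp.weight w d = k
        then ∑ x ∈ Finset.HasAntidiagonal.antidiagonal d, coeff x.1 p * coeff x.2 F else 0)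
      = ∑ x ∈ Finset.HasAntidiagonal.antidiagonal d,
          (if Finsupp.weight w d = k then coeff x.1 p * coeff x.2 F else 0) := by
    split_ifs <;> simp
  rw [this]
  apply Finset.sum_congr rfl
  rintro ⟨x, y⟩ hxy
  rw [Finset.HasAntidiagonal.mem_antidiagonal] at hxy
  rw [coeff_weightedHomogeneousComponent]
  by_cases hy : coeff y F = 0
  · simp [hy]
  have hwy : Finsupp.weight w y = e := hF hy
  have hwd : Finsupp.weight w d = Finsupp.weight w x + e := by rw [← hxy, map_add, hwy]
  by_cases hx : Finsupp.weight w x = k - e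
  · rw [if_pos (by omega), if_pos hx]
  · rw [if_neg (by omega), if_neg hx, zero_mul]


/-- span of first `m` elements of a sequence -/
noncomputable def Jsp (g : ℕ → MvPolynomial σ R) (m : ℕ) : Ideal (MvPolynomial σ R) :=
  Ideal.span (Set.range fun i : Fin m => g i)

lemma g_mem_Jsp {g : ℕ → MvPolynomial σ R} {m i : ℕ} (h : i < m) : g i ∈ Jsp g m :=
  Ideal.subset_span ⟨⟨i, h⟩, rfl⟩

lemma mem_Jsp_iff {g : ℕ → MvPolynomial σ R} {m : ℕ} {p : MvPolynomial σ R} :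
    p ∈ Jsp g m ↔ ∃ c : ℕ → MvPolynomial σ R, p = ∑ i ∈ range m, c i * g i := by
  constructor
  · intro hp
    obtain ⟨c, hc⟩ := (Submodule.mem_span_range_iff_exists_fun _).mp hp
    classical
    refine ⟨fun n => if h : n < m then c ⟨n, h⟩ else 0, ?_⟩
    rw [← Fin.sum_univ_eq_sum_range (f := fun k => (if h : k < m then c ⟨k, h⟩ else 0) * g k) m]
    rw [← hc]
    apply Finset.sum_congr rfl
    intro i _
    rw [dif_pos i.isLt, smul_eq_mul]
  · rintro ⟨c, rfl⟩
    exact Submodule.sum_mem _ fun i hi =>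
      Ideal.mul_mem_left _ _ (g_mem_Jsp (mem_range.mp hi))

lemma sum_skew {m : ℕ} (c : ℕ → ℕ → MvPolynomial σ R) (q : ℕ → MvPolynomial σ R)
    (hskew : ∀ i j, c i j = - c j i) (hdiag : ∀ i, c i i = 0) :
    ∑ i ∈ range m, ∑ j ∈ range m, c i j * q j * q i = 0 := by
  classical
  rw [← Finset.sum_product' (f := fun i j => c i j * q j * q i)]
  refine Finset.sum_involution (fun x _ => (x.2, x.1)) ?_ ?_ ?_ ?_
  · rintro ⟨i, j⟩ _
    simp only
    rw [hskew i j]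
    ring
  · rintro ⟨i, j⟩ _ hne heq
    apply hne
    have : i = j := congrArg Prod.snd heq
    simp [this, hdiag]
  · rintro ⟨i, j⟩ hm
    simp only [Finset.mem_product] at hm ⊢
    exact ⟨hm.2, hm.1⟩
  · rintro ⟨i, j⟩ _; rfl

lemma wh_neg {n : ℤ} {p : MvPolynomial σ R} (h : IsWeightedHomogeneous w p n) :
    IsWeightedHomogeneous w (-p) n := by
  intro dd hdd
  exact h (fun hc => hdd (by rw [coeff_neg, hc, neg_zero]))

section Main

variable (f F : ℕ → MvPolynomial σ R) (d : ℕ → ℤ)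

lemma syzygy (r : ℕ)
    (hF : ∀ i < r, IsWeightedHomogeneous w (F i) (d i))
    (hreg : ∀ m < r, ∀ p, p * F m ∈ Jsp F m → p ∈ Jsp F m) :
    ∀ m, m ≤ r → ∀ (D : ℤ) (H : ℕ → MvPolynomial σ R),
      (∀ i < m, IsWeightedHomogeneous w (H i) (D - d i)) →
      (∑ i ∈ range m, H i * F i = 0) →
      ∃ c : ℕ → ℕ → MvPolynomial σ R,
        (∀ i j, c i j = - c j i) ∧ (∀ i, c i i = 0) ∧
        (∀ i j, IsWeightedHomogeneous w (c i j) (D - d i - d j)) ∧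
        (∀ i < m, H i = ∑ j ∈ range m, c i j * F j) := by
  classical
  intro m
  induction m with
  | zero =>
    intro _ D H _ _
    exact ⟨0, by simp, by simp, fun i j => by simpa using isWeightedHomogeneous_zero _ _ _,
      fun i hi => by omega⟩
  | succ m ih =>
    intro hm D H hH hsum
    have hmr : m < r := hm
    rw [Finset.sum_range_succ] at hsum
    have hmem : H m * F m ∈ Jsp F m := by
      have : H m * F m = - ∑ i ∈ range m, H i * F i := by linear_combination hsum
      rw [this]
      exact Submodule.neg_mem _ (Submodule.sum_mem _ fun i hi =>
        Ideal.mul_mem_left _ _ (g_mem_Jsp (mem_range.mp hi)))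
    obtain ⟨b, hb⟩ := mem_Jsp_iff.mp (hreg m hmr _ hmem)
    set b' : ℕ → MvPolynomial σ R :=
      fun i => weightedHomogeneousComponent w (D - d m - d i) (b i) with hb'def
    have hb'homog : ∀ i, IsWeightedHomogeneous w (b' i) (D - d m - d i) :=
      fun i => weightedHomogeneousComponent_isWeightedHomogeneous _ _
    have hHm : H m = ∑ i ∈ range m, b' i * F i := by
      have h1 : weightedHomogeneousComponent w (D - d m) (H m) = H m :=
        IsWeightedHomogeneous.weightedHomogeneousComponent_same (hH m (by omega))
      calc H m = weightedHomogeneousComponent w (D - d m) (H m) := h1.symm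
        _ = weightedHomogeneousComponent w (D - d m) (∑ i ∈ range m, b i * F i) := by rw [← hb]
        _ = ∑ i ∈ range m, weightedHomogeneousComponent w (D - d m) (b i * F i) :=
            map_sum _ _ _
        _ = ∑ i ∈ range m, b' i * F i := by
            apply Finset.sum_congr rfl
            intro i hi
            rw [comp_mul_homog (hF i (lt_of_lt_of_le (mem_range.mp hi) (by omega)))]
    set H' : ℕ → MvPolynomial σ R := fun i => H i + b' i * F m with hH'def
    have hH'homog : ∀ i < m, IsWeightedHomogeneous w (H' i) (D - d i) := by
      intro i hi
      apply (hH i (by omega)).add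
      have := (hb'homog i).mul (hF m hmr)
      convert this using 1
      ring
    have hH'sum : ∑ i ∈ range m, H' i * F i = 0 := by
      have : ∑ i ∈ range m, H' i * F i
          = (∑ i ∈ range m, H i * F i) + (∑ i ∈ range m, b' i * F i) * F m := by
        rw [Finset.sum_mul, ← Finset.sum_add_distrib]
        apply Finset.sum_congr rfl
        intro i _
        ring
      rw [this, ← hHm]
      exact hsum
    obtain ⟨c', hc'skew, hc'diag, hc'homog, hc'⟩ := ih (by omega) D H' hH'homog hH'sum
    refine ⟨fun i j =>
      if i < m ∧ j < m then c' i j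
      else if i < m ∧ j = m then -(b' i)
      else if i = m ∧ j < m then b' j
      else 0, ?_, ?_, ?_, ?_⟩
    · intro i j
      dsimp only
      split_ifs
      all_goals try exact hc'skew i j
      all_goals try ring
      all_goals omega
    · intro i
      dsimp only
      split_ifs with h1 h2 h3
      all_goals first | exact hc'diag i | rfl | omega
    · intro i j
      dsimp only
      split_ifs with h1 h2 h3
      · have := hc'homog i j
        exact this
      · obtain ⟨hi, hj⟩ := h2
        rw [show D - d i - d j = D - d m - d i by rw [hj]; ring]
        exact wh_neg (hb'homog i)
      · obtain ⟨hi, hj⟩ := h3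
        rw [hi]
        exact hb'homog j
      · simpa using isWeightedHomogeneous_zero _ _ _
    · intro i hi
      dsimp only
      rw [Finset.sum_range_succ]
      rcases Nat.lt_or_ge i m with him | him
      · have hstep : ∀ j ∈ range m,
            (if i < m ∧ j < m then c' i j
              else if i < m ∧ j = m then -(b' i)
              else if i = m ∧ j < m then b' j else 0) * F j = c' i j * F j := by
          intro j hj
          rw [if_pos ⟨him, mem_range.mp hj⟩]
        rw [Finset.sum_congr rfl hstep, ← hc' i him,
          if_neg (show ¬(i < m ∧ m < m) by omega), if_pos ⟨him, rfl⟩]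
        simp only [hH'def]
        ring
      · have hi' : i = m := by omega
        rw [hi']
        have hstep : ∀ j ∈ range m,
            (if m < m ∧ j < m then c' m j
              else if m < m ∧ j = m then -(b' m)
              else if m = m ∧ j < m then b' j else 0) * F j = b' j * F j := by
          intro j hj
          rw [if_neg (by omega), if_neg (by omega), if_pos ⟨rfl, mem_range.mp hj⟩]
        rw [Finset.sum_congr rfl hstep, ← hHm,
          if_neg (show ¬(m < m ∧ m < m) by omega), if_neg (by omega),
          if_neg (show ¬(m = m ∧ m < m) by omega)]
        ring

lemma rewrite_bound (r : ℕ)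
    (hF : ∀ i < r, IsWeightedHomogeneous w (F i) (d i))
    (htail : ∀ i < r, Bel w (d i) (f i - F i))
    (hreg : ∀ m < r, ∀ p, p * F m ∈ Jsp F m → p ∈ Jsp F m)
    (m : ℕ) (hm : m ≤ r) (D : ℤ) :
    ∀ (t : ℕ) (E : ℤ) (h : ℕ → MvPolynomial σ R) (p : MvPolynomial σ R),
      E ≤ D + t →
      p = ∑ i ∈ range m, h i * f i →
      (∀ i < m, Bel w (E - d i) (h i)) →
      Bel w D p →
      ∃ h' : ℕ → MvPolynomial σ R,
        p = ∑ i ∈ range m, h' i * f i ∧ ∀ i < m, Bel w (D - d i) (h' i) := by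
  intro t
  induction t with
  | zero =>
    intro E h p hE hp hh _
    exact ⟨h, hp, fun i hi => (hh i hi).mono (by omega)⟩
  | succ t ih =>
    intro E h p hE hp hh hD
    by_cases hED : E ≤ D + t
    · exact ih E h p hED hp hh hD
    have hDE : D < E := by omega
    set H : ℕ → MvPolynomial σ R :=
      fun i => weightedHomogeneousComponent w (E - 1 - d i) (h i) with hHdef
    have hHhom : ∀ i < m, IsWeightedHomogeneous w (H i) (E - 1 - d i) := fun i _ =>
      weightedHomogeneousComponent_isWeightedHomogeneous _ _
    have hHsum : ∑ i ∈ range m, H i * F i = 0 := by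
      have h0 : weightedHomogeneousComponent w (E - 1) p = 0 :=
        comp_eq_zero_of_bel hD (by omega)
      have h1 : weightedHomogeneousComponent w (E - 1) p
          = ∑ i ∈ range m, H i * F i := by
        rw [hp, map_sum]
        apply Finset.sum_congr rfl
        intro i hi
        have him : i < m := mem_range.mp hi
        have hir : i < r := lt_of_lt_of_le him hm
        have hsplit : h i * f i = h i * F i + h i * (f i - F i) := by ring
        rw [hsplit, map_add, comp_mul_homog (hF i hir)]
        have : weightedHomogeneousComponent w (E - 1) (h i * (f i - F i)) = 0 := by
          apply comp_eq_zero_of_bel ((hh i him).mul (htail i hir)) (by omega)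
        rw [this, add_zero]
      rw [← h1, h0]
    obtain ⟨c, hcskew, hcdiag, hchom, hc⟩ :=
      syzygy F d r hF hreg m hm (E - 1) H
        (fun i hi => by
          rw [show E - 1 - d i = (E - 1) - d i by ring]; exact hHhom i hi) hHsum
    set h' : ℕ → MvPolynomial σ R :=
      fun i => h i - H i + ∑ j ∈ range m, c i j * (F j - f j) with hh'def
    have hsum' : p = ∑ i ∈ range m, h' i * f i := by
      have e1 : ∑ i ∈ range m, h' i * f i
          = (∑ i ∈ range m, h i * f i) - (∑ i ∈ range m, H i * f i)
            + ∑ i ∈ range m, (∑ j ∈ range m, c i j * (F j - f j)) * f i := by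
        rw [← Finset.sum_sub_distrib, ← Finset.sum_add_distrib]
        apply Finset.sum_congr rfl
        intro i _
        simp only [hh'def]
        ring
      have e2 : ∑ i ∈ range m, H i * f i
          = ∑ i ∈ range m, ∑ j ∈ range m, c i j * F j * f i := by
        apply Finset.sum_congr rfl
        intro i hi
        rw [hc i (mem_range.mp hi), Finset.sum_mul]
      have e3 : ∑ i ∈ range m, (∑ j ∈ range m, c i j * (F j - f j)) * f i
          = (∑ i ∈ range m, ∑ j ∈ range m, c i j * F j * f i)
            - ∑ i ∈ range m, ∑ j ∈ range m, c i j * f j * f i := by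
        rw [← Finset.sum_sub_distrib]
        apply Finset.sum_congr rfl
        intro i _
        rw [Finset.sum_mul, ← Finset.sum_sub_distrib]
        apply Finset.sum_congr rfl
        intro j _
        ring
      rw [e1, e2, e3, sum_skew c f hcskew hcdiag, hp]
      ring
    have hbel' : ∀ i < m, Bel w (E - 1 - d i) (h' i) := by
      intro i hi
      apply Bel.add
      · exact bel_sub_comp ((hh i hi).mono (by omega))
      · apply bel_sum
        intro j hj
        have hjr : j < r := lt_of_lt_of_le (mem_range.mp hj) hm
        have h1 : Bel w (E - 1 - d i - d j + 1) (c i j) :=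
          IsWeightedHomogeneous.bel (hchom i j) (by omega)
        have h2 : Bel w (d j) (F j - f j) := by
          have := (htail j hjr).neg
          rwa [neg_sub] at this
        have := h1.mul h2
        exact this.mono (by omega)
    exact ih (E - 1) h' p (by omega) hsum' hbel' hD

theorem transfer (hw : ∀ s, 0 ≤ w s) (r : ℕ)
    (hF : ∀ i < r, IsWeightedHomogeneous w (F i) (d i))
    (htail : ∀ i < r, Bel w (d i) (f i - F i))
    (hreg : ∀ m < r, ∀ p, p * F m ∈ Jsp F m → p ∈ Jsp F m) :
    ∀ m < r, ∀ p, p * f m ∈ Jsp f m → p ∈ Jsp f m := by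
  intro m hm
  have hmr : m ≤ r := hm.le
  have key : ∀ n : ℕ, ∀ q, Bel w (n : ℤ) q → q * f m ∈ Jsp f m → q ∈ Jsp f m := by
    intro n
    induction n using Nat.strong_induction_on with
    | _ n ihn =>
      intro q hq hqmem
      rcases Nat.eq_zero_or_pos n with hn0 | hnpos
      · have : q = 0 := hq.eq_zero hw (by omega)
        rw [this]; exact Submodule.zero_mem _
      set N : ℤ := (n : ℤ) with hNdef
      have hN1 : 1 ≤ N := by omega
      set D : ℤ := N + d m with hDdef
      obtain ⟨h0, hh0⟩ := mem_Jsp_iff.mp hqmem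
      -- uniform initial bound
      have hb : ∀ i : ℕ, ∃ b : ℤ, Bel w b (h0 i) := fun i => exists_bel (h0 i)
      choose b hbspec using hb
      set E : ℤ := D + ∑ i ∈ range m, (b i + d i - D).toNat with hEdef
      have hDE : D ≤ E := by
        have : (0 : ℤ) ≤ (∑ i ∈ range m, (b i + d i - D).toNat : ℕ) := Int.natCast_nonneg _
        omega
      have hEbound : ∀ i < m, b i + d i ≤ E := by
        intro i hi
        have h1 : ((b i + d i - D).toNat : ℤ) ≤ (∑ j ∈ range m, (b j + d j - D).toNat : ℕ) := by
          have := Finset.single_le_sum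
            (f := fun j => (b j + d j - D).toNat) (fun j _ => Nat.zero_le _) (mem_range.mpr hi)
          exact_mod_cast this
        have h2 : b i + d i - D ≤ ((b i + d i - D).toNat : ℤ) := Int.self_le_toNat _
        omega
      obtain ⟨h, hhsum, hhbel⟩ :=
        rewrite_bound f F d r hF htail hreg m hmr D
          (∑ i ∈ range m, (b i + d i - D).toNat) E h0 (q * f m)
          (by omega)
          hh0
          (fun i hi => (hbspec i).mono (by have := hEbound i hi; omega))
          (by
            have h2 : Bel w (d m + 1) (f m) := by
              have h3 : Bel w (d m + 1) (F m) := IsWeightedHomogeneous.bel (hF m hm) (by omega)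
              have h4 : Bel w (d m + 1) (f m - F m) := (htail m hm).mono (by omega)
              have := h4.add h3
              rwa [sub_add_cancel] at this
            have := hq.mul h2
            exact this.mono (by omega))
      -- extract top components at degree D - 1
      set Q : MvPolynomial σ R := weightedHomogeneousComponent w (N - 1) q with hQdef
      have htop : Q * F m = ∑ i ∈ range m,
          weightedHomogeneousComponent w (D - 1 - d i) (h i) * F i := by
        have lhs : weightedHomogeneousComponent w (D - 1) (q * f m) = Q * F m := by
          have hsplit : q * f m = q * F m + q * (f m - F m) := by ring
          rw [hsplit, map_add, comp_mul_homog (hF m hm)]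
          have hz : weightedHomogeneousComponent w (D - 1) (q * (f m - F m)) = 0 :=
            comp_eq_zero_of_bel (hq.mul (htail m hm)) (by omega)
          rw [hz, add_zero, hQdef, show D - 1 - d m = N - 1 by omega]
        have rhs : weightedHomogeneousComponent w (D - 1) (q * f m)
            = ∑ i ∈ range m, weightedHomogeneousComponent w (D - 1 - d i) (h i) * F i := by
          rw [hhsum, map_sum]
          apply Finset.sum_congr rfl
          intro i hi
          have him : i < m := mem_range.mp hi
          have hir : i < r := lt_of_lt_of_le him hmr
          have hsplit : h i * f i = h i * F i + h i * (f i - F i) := by ring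
          rw [hsplit, map_add, comp_mul_homog (hF i hir)]
          have hz : weightedHomogeneousComponent w (D - 1) (h i * (f i - F i)) = 0 :=
            comp_eq_zero_of_bel ((hhbel i him).mul (htail i hir)) (by omega)
          rw [hz, add_zero]
        rw [← lhs, rhs]
      have hQmem : Q ∈ Jsp F m := by
        apply hreg m hm
        rw [htop]
        exact Submodule.sum_mem _ fun i hi =>
          Ideal.mul_mem_left _ _ (g_mem_Jsp (mem_range.mp hi))
      obtain ⟨bb, hbb⟩ := mem_Jsp_iff.mp hQmem
      set bb' : ℕ → MvPolynomial σ R :=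
        fun i => weightedHomogeneousComponent w (N - 1 - d i) (bb i) with hbb'def
      have hQ' : Q = ∑ i ∈ range m, bb' i * F i := by
        have h1 : weightedHomogeneousComponent w (N - 1) Q = Q :=
          IsWeightedHomogeneous.weightedHomogeneousComponent_same
            (weightedHomogeneousComponent_isWeightedHomogeneous _ _)
        calc Q = weightedHomogeneousComponent w (N - 1) Q := h1.symm
          _ = weightedHomogeneousComponent w (N - 1) (∑ i ∈ range m, bb i * F i) := by rw [← hbb]
          _ = ∑ i ∈ range m, bb' i * F i := by
              rw [map_sum]
              apply Finset.sum_congr rfl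
              intro i hi
              rw [comp_mul_homog (hF i (lt_of_lt_of_le (mem_range.mp hi) hmr))]
      set q'' : MvPolynomial σ R := q - ∑ i ∈ range m, bb' i * f i with hq''def
      have hq''mem : q'' * f m ∈ Jsp f m := by
        have : q'' * f m = q * f m - ∑ i ∈ range m, (bb' i * f m) * f i := by
          rw [hq''def, sub_mul, Finset.sum_mul]
          congr 1
          apply Finset.sum_congr rfl
          intro i _
          ring
        rw [this]
        exact Submodule.sub_mem _ hqmem
          (Submodule.sum_mem _ fun i hi =>
            Ideal.mul_mem_left _ _ (g_mem_Jsp (mem_range.mp hi)))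
      have hq''bel : Bel w (N - 1) q'' := by
        have h1 : Bel w (N - 1) (q - Q) := by
          apply bel_sub_comp
          rw [show N - 1 + 1 = N by ring]
          exact hq
        have h2 : Bel w (N - 1) (∑ i ∈ range m, bb' i * f i - Q) := by
          rw [hQ', ← Finset.sum_sub_distrib]
          apply bel_sum
          intro i hi
          have hir : i < r := lt_of_lt_of_le (mem_range.mp hi) hmr
          have e : bb' i * f i - bb' i * F i = bb' i * (f i - F i) := by ring
          rw [e]
          have h3 : Bel w (N - d i) (bb' i) :=
            IsWeightedHomogeneous.bel
              (weightedHomogeneousComponent_isWeightedHomogeneous _ _) (by omega)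
          have := h3.mul (htail i hir)
          exact this.mono (by omega)
        have := h1.sub h2
        rw [hq''def]
        convert this using 1
        ring
      have hq''n : Bel w ((n - 1 : ℕ) : ℤ) q'' := by
        have : ((n - 1 : ℕ) : ℤ) = N - 1 := by omega
        rwa [this]
      have hmemq'' := ihn (n - 1) (by omega) q'' hq''n hq''mem
      have : q = q'' + ∑ i ∈ range m, bb' i * f i := by rw [hq''def]; ring
      rw [this]
      exact Submodule.add_mem _ hmemq''
        (Submodule.sum_mem _ fun i hi =>
          Ideal.mul_mem_left _ _ (g_mem_Jsp (mem_range.mp hi)))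
  intro p hp
  obtain ⟨nb, hnb⟩ := exists_bel (w := w) p
  exact key nb.toNat p (hnb.mono (Int.self_le_toNat _)) hp

lemma X_mul_X_eq (a b : σ) :
    (X a * X b : MvPolynomial σ R)
      = monomial (Finsupp.single a 1 + Finsupp.single b 1) 1 := by
  rw [X, X, monomial_mul, one_mul]

lemma mem_monomial_span_of_forall {m : ℕ} {e : ℕ → σ →₀ ℕ} {p : MvPolynomial σ R}
    (h : ∀ dd ∈ p.support, ∃ i < m, e i ≤ dd) :
    p ∈ Jsp (fun i => monomial (e i) (1 : R)) m := by
  classical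
  rw [show p = ∑ dd ∈ p.support, monomial dd (coeff dd p) from
    (support_sum_monomial_coeff p).symm]
  apply Submodule.sum_mem
  intro dd hdd
  obtain ⟨i, him, hle⟩ := h dd hdd
  have : monomial dd (coeff dd p)
      = monomial (dd - e i) (coeff dd p) * monomial (e i) 1 := by
    rw [monomial_mul, mul_one, tsub_add_cancel_of_le hle]
  rw [this]
  exact Ideal.mul_mem_left _ _ (g_mem_Jsp him)

lemma forall_of_mem_monomial_span {m : ℕ} {e : ℕ → σ →₀ ℕ} {p : MvPolynomial σ R}
    (h : p ∈ Jsp (fun i => monomial (e i) (1 : R)) m) :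
    ∀ dd ∈ p.support, ∃ i < m, e i ≤ dd := by
  classical
  obtain ⟨c, rfl⟩ := mem_Jsp_iff.mp h
  intro dd hdd
  by_contra hc
  push_neg at hc
  apply MvPolynomial.mem_support_iff.mp hdd
  rw [coeff_sum]
  apply Finset.sum_eq_zero
  intro i hi
  rw [coeff_mul_monomial']
  rw [if_neg]
  intro hle
  exact absurd hle (hc i (mem_range.mp hi))

/-- Regularity step for quadratic monomials in pairwise distinct variables. -/
lemma monomial_hreg (r : ℕ) (u t : ℕ → σ)
    (hut : ∀ i < r, ∀ j < r, u i ≠ t j)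
    (hu : ∀ i < r, ∀ j < r, u i = u j → i = j)
    (ht : ∀ i < r, ∀ j < r, t i = t j → i = j) :
    ∀ m < r, ∀ p : MvPolynomial σ R,
      p * ((fun i => X (u i) * X (t i)) m) ∈ Jsp (fun i => X (u i) * X (t i)) m →
      p ∈ Jsp (fun i => X (u i) * X (t i)) m := by
  classical
  intro m hmr p hp
  set e : ℕ → σ →₀ ℕ := fun i => Finsupp.single (u i) 1 + Finsupp.single (t i) 1 with hedef
  have hG : (fun i => X (u i) * X (t i) : ℕ → MvPolynomial σ R)
      = fun i => monomial (e i) (1 : R) := by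
    funext i
    rw [X_mul_X_eq]
  rw [hG] at hp ⊢
  apply mem_monomial_span_of_forall
  intro dd hdd
  have hmem : dd + e m ∈ (p * monomial (e m) (1 : R)).support := by
    rw [MvPolynomial.mem_support_iff, coeff_mul_monomial, mul_one]
    exact MvPolynomial.mem_support_iff.mp hdd
  obtain ⟨i, him, hle⟩ := forall_of_mem_monomial_span hp _ hmem
  have hir : i < r := lt_trans him hmr
  refine ⟨i, him, ?_⟩
  have hiu : u i ≠ u m := fun hh => absurd (hu i hir m hmr hh) (by omega)
  have hit : t i ≠ t m := fun hh => absurd (ht i hir m hmr hh) (by omega)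
  have hiut : u i ≠ t m := hut i hir m hmr
  have hitu : t i ≠ u m := fun hh => (hut m hmr i hir hh.symm).elim
  have huti : u i ≠ t i := hut i hir i hir
  rw [Finsupp.le_def]
  intro s
  have hles := Finsupp.le_def.mp hle s
  have hadd : (dd + e m) s = dd s + e m s := rfl
  have heval : ∀ k : ℕ, e k s = (if u k = s then 1 else 0) + (if t k = s then 1 else 0) := by
    intro k
    simp [hedef, Finsupp.single_apply]
  rw [hadd, heval i, heval m] at hles
  rw [heval i]
  by_cases hsu : u i = s
  · have : u m ≠ s := fun hh => hiu (hsu.trans hh.symm)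
    have : t m ≠ s := fun hh => hiut (hsu.trans hh.symm)
    have htis : t i ≠ s := fun hh => huti (hsu.trans hh.symm)
    simp_all
  by_cases hst : t i = s
  · have : u m ≠ s := fun hh => hitu (hst.trans hh.symm)
    have : t m ≠ s := fun hh => hit (hst.trans hh.symm)
    simp_all
  · simp [hsu, hst]

lemma one_not_mem_Jsp [Nontrivial R] {g : ℕ → MvPolynomial σ R} {m : ℕ}
    (hconst : ∀ i < m, constantCoeff (g i) = 0) :
    (1 : MvPolynomial σ R) ∉ Jsp g m := by
  intro hmem
  obtain ⟨c, hc⟩ := mem_Jsp_iff.mp hmem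
  have := congrArg (constantCoeff (σ := σ) (R := R)) hc
  rw [map_one, map_sum] at this
  rw [Finset.sum_eq_zero (fun i hi => by
    rw [map_mul, hconst i (mem_range.mp hi), mul_zero])] at this
  exact one_ne_zero this

end Main
end RegSeqAux

open RegSeqAux Finset

open MvPolynomial in
theorem entries_of_composition_regular_sequence
    (e v f : ℕ) (h : e + f ≤ v) :
    -- coordinate ring of Hom(E,V) × Hom(V,F): variables are the matrix entries of
    -- f : E → V (type `Fin v × Fin e`) and g : V → F (type `Fin f × Fin v`)
    let A := MvPolynomial ((Fin v × Fin e) ⊕ (Fin f × Fin v)) ℂ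
    -- the entries of g ∘ f : E → F, spanning a copy of E ⊗ F* inside A
    let entry : Fin f × Fin e → A := fun ki =>
      ∑ j : Fin v, X (Sum.inr (ki.1, j)) * X (Sum.inl (j, ki.2))
    RingTheory.Sequence.IsRegular A
      ((Finset.univ : Finset (Fin f × Fin e)).toList.map entry)
    ∧ ((Finset.univ : Finset (Fin f × Fin e)).toList.map entry).length = e * f := by
  intro A entry
  classical
  constructor
  swap
  · rw [List.length_map, Finset.length_toList, Finset.card_univ, Fintype.card_prod,
      Fintype.card_fin, Fintype.card_fin, Nat.mul_comm]
  by_cases hef : e = 0 ∨ f = 0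
  · haveI : IsEmpty (Fin f × Fin e) := by
      rcases hef with rfl | rfl
      · exact Prod.isEmpty_right
      · exact Prod.isEmpty_left
    rw [Finset.univ_eq_empty, Finset.toList_empty, List.map_nil]
    exact RingTheory.Sequence.IsRegular.nil _ _
  push_neg at hef
  obtain ⟨he, hf⟩ := hef
  have he1 : 1 ≤ e := Nat.one_le_iff_ne_zero.mpr he
  have hf1 : 1 ≤ f := Nat.one_le_iff_ne_zero.mpr hf
  -- the weight function
  set w : (Fin v × Fin e) ⊕ (Fin f × Fin v) → ℤ := fun s =>
    Sum.rec (fun ji => 2 * (ji.1 : ℤ) * (ji.2 : ℤ))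
      (fun kj => 2 * (kj.2 : ℤ) * (kj.1 : ℤ) - (kj.2 : ℤ) ^ 2 + (v : ℤ) ^ 2) s with hwdef
  have hw : ∀ s, 0 ≤ w s := by
    rintro (⟨j, i⟩ | ⟨k, j⟩)
    · have h1 : (0:ℤ) ≤ (j : ℤ) := Int.natCast_nonneg _
      have h2 : (0:ℤ) ≤ (i : ℤ) := Int.natCast_nonneg _
      show (0:ℤ) ≤ 2 * (j : ℤ) * (i : ℤ)
      positivity
    · show (0:ℤ) ≤ 2 * (j : ℤ) * (k : ℤ) - (j : ℤ) ^ 2 + (v : ℤ) ^ 2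
      have h1 : (j : ℤ) < (v : ℤ) := by exact_mod_cast j.isLt
      have h2 : (0:ℤ) ≤ (j : ℤ) := Int.natCast_nonneg _
      have h3 : (0:ℤ) ≤ (k : ℤ) := Int.natCast_nonneg _
      nlinarith
  -- the enumeration of the entries
  set L : List (Fin f × Fin e) := (Finset.univ : Finset (Fin f × Fin e)).toList with hLdef
  set r : ℕ := L.length with hrdef
  haveI : Inhabited (Fin f × Fin e) := ⟨⟨⟨0, by omega⟩, ⟨0, by omega⟩⟩⟩
  set κ : ℕ → Fin f × Fin e := fun n => L.getD n default with hκdef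
  have hκget : ∀ n, n < r → ∀ (hn : n < L.length), κ n = L[n] :=
    fun n _ hn => List.getD_eq_getElem L default hn
  have hκinj : ∀ n < r, ∀ m < r, κ n = κ m → n = m := by
    intro n hn m hm hnm
    rw [hκget n hn hn, hκget m hm hm] at hnm
    exact (Finset.nodup_toList _).getElem_inj_iff.mp hnm
  -- the distinguished index j* = k + i
  have hjlt : ∀ ki : Fin f × Fin e, ki.1.val + ki.2.val < v := by
    rintro ⟨k, i⟩
    have := k.isLt
    have := i.isLt
    simp only
    omega
  set jstar : Fin f × Fin e → Fin v := fun ki => ⟨ki.1.val + ki.2.val, hjlt ki⟩ with hjdef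
  set u : ℕ → (Fin v × Fin e) ⊕ (Fin f × Fin v) :=
    fun n => Sum.inr ((κ n).1, jstar (κ n)) with hudef
  set t : ℕ → (Fin v × Fin e) ⊕ (Fin f × Fin v) :=
    fun n => Sum.inl (jstar (κ n), (κ n).2) with htdef
  set Fs : ℕ → A := fun n => X (u n) * X (t n) with hFsdef
  set fs : ℕ → A := fun n => entry (κ n) with hfsdef
  set ds : ℕ → ℤ := fun n => ((κ n).1.val + (κ n).2.val : ℤ) ^ 2 + (v : ℤ) ^ 2 with hdsdef
  have wsingle : ∀ a, Finsupp.weight w (Finsupp.single a 1) = w a := by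
    intro a
    rw [Finsupp.weight_apply, Finsupp.sum_single_index]
    · rw [one_smul]
    · rw [zero_smul]
  have wpair : ∀ a b, Finsupp.weight w (Finsupp.single a 1 + Finsupp.single b 1) = w a + w b := by
    intro a b
    rw [map_add, wsingle, wsingle]
  -- homogeneity of the leading monomials
  have hF : ∀ n < r, IsWeightedHomogeneous w (Fs n) (ds n) := by
    intro n hn
    rw [hFsdef]
    simp only
    rw [X_mul_X_eq]
    apply isWeightedHomogeneous_monomial
    rw [wpair]
    show (2 * ((jstar (κ n) : Fin v) : ℤ) * ((κ n).1 : ℤ) - ((jstar (κ n) : Fin v) : ℤ) ^ 2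
        + (v : ℤ) ^ 2) + 2 * ((jstar (κ n) : Fin v) : ℤ) * ((κ n).2 : ℤ) = ds n
    have hj : ((jstar (κ n) : Fin v) : ℤ) = ((κ n).1 : ℤ) + ((κ n).2 : ℤ) := by
      rw [hjdef]
      push_cast
      rfl
    rw [hj, hdsdef]
    push_cast
    ring
  -- the tails have lower weight
  have htail : ∀ n < r, Bel w (ds n) (fs n - Fs n) := by
    intro n hn
    have hsplit : fs n - Fs n
        = ∑ j ∈ Finset.univ.erase (jstar (κ n)),
            (X (Sum.inr ((κ n).1, j)) * X (Sum.inl (j, (κ n).2)) : A) := by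
      have hsum : (∑ j ∈ Finset.univ.erase (jstar (κ n)),
            (X (Sum.inr ((κ n).1, j)) * X (Sum.inl (j, (κ n).2)) : A)) + Fs n = fs n := by
        rw [hfsdef, hFsdef]
        simp only
        rw [hudef, htdef]
        simp only
        exact Finset.sum_erase_add _ _ (Finset.mem_univ _)
      rw [← hsum]
      ring
    rw [hsplit]
    apply bel_sum
    intro j hj
    have hjne : j ≠ jstar (κ n) := Finset.ne_of_mem_erase hj
    rw [X_mul_X_eq]
    intro dd hdd
    rw [coeff_monomial]
    rw [if_neg]
    intro heq
    rw [← heq] at hdd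
    rw [wpair] at hdd
    revert hdd
    show ¬(ds n ≤ (2 * (j : ℤ) * ((κ n).1 : ℤ) - (j : ℤ) ^ 2 + (v : ℤ) ^ 2)
        + 2 * (j : ℤ) * ((κ n).2 : ℤ))
    rw [hdsdef]
    push_cast
    have hne : (j : ℤ) ≠ ((κ n).1 : ℤ) + ((κ n).2 : ℤ) := by
      intro hcon
      apply hjne
      apply Fin.ext
      rw [hjdef]
      simp only
      exact_mod_cast hcon
    have hsq : 0 < ((j : ℤ) - (((κ n).1 : ℤ) + ((κ n).2 : ℤ))) ^ 2 := by
      have : (j : ℤ) - (((κ n).1 : ℤ) + ((κ n).2 : ℤ)) ≠ 0 := by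
        intro hcon
        exact hne (by omega)
      positivity
    nlinarith [hsq]
  -- regularity of the monomial leading terms
  have hureg : ∀ m < r, ∀ p : A, p * Fs m ∈ Jsp Fs m → p ∈ Jsp Fs m := by
    have hut : ∀ i < r, ∀ j < r, u i ≠ t j := by
      intro i _ j _
      rw [hudef, htdef]
      simp
    have hu : ∀ i < r, ∀ j < r, u i = u j → i = j := by
      intro i hi j hj hij
      rw [hudef] at hij
      simp only [Sum.inr.injEq, Prod.mk.injEq] at hij
      obtain ⟨h1, h2⟩ := hij
      apply hκinj i hi j hj
      have h3 : (κ i).1.val + (κ i).2.val = (κ j).1.val + (κ j).2.val := by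
        have := congrArg Fin.val h2
        rw [hjdef] at this
        exact this
      have h4 : (κ i).1.val = (κ j).1.val := congrArg Fin.val h1
      have h5 : (κ i).2 = (κ j).2 := Fin.ext (by omega)
      exact Prod.ext h1 h5
    have ht : ∀ i < r, ∀ j < r, t i = t j → i = j := by
      intro i hi j hj hij
      rw [htdef] at hij
      simp only [Sum.inl.injEq, Prod.mk.injEq] at hij
      obtain ⟨h2, h1⟩ := hij
      apply hκinj i hi j hj
      have h3 : (κ i).1.val + (κ i).2.val = (κ j).1.val + (κ j).2.val := by
        have := congrArg Fin.val h2
        rw [hjdef] at this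
        exact this
      have h4 : (κ i).2.val = (κ j).2.val := congrArg Fin.val h1
      have h5 : (κ i).1 = (κ j).1 := Fin.ext (by omega)
      exact Prod.ext h5 h1
    have := monomial_hreg (R := ℂ) r u t hut hu ht
    intro m hm p hp
    exact this m hm p hp
  -- weak regularity of the entry sequence
  have hwreg : ∀ m < r, ∀ p : A, p * fs m ∈ Jsp fs m → p ∈ Jsp fs m :=
    transfer fs Fs ds hw r hF htail hureg
  -- the entries have no constant term
  have hconst : ∀ n < r, constantCoeff (fs n) = 0 := by
    intro n hn
    rw [hfsdef]
    simp [entry]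
  -- identification of the ideals
  set rs : List A := L.map entry with hrsdef
  have hlen : rs.length = r := by rw [hrsdef, List.length_map]
  have hget : ∀ (i : ℕ) (hi : i < rs.length), rs[i] = fs i := by
    intro i hi
    have hi' : i < L.length := by rwa [hlen] at hi
    have h1 : rs[i] = entry (L[i]'hi') := List.getElem_map entry
    rw [h1, hfsdef]
    simp only
    rw [hκget i (by rwa [← hrdef] at hi') hi']
  have hideal : ∀ i ≤ r, Ideal.ofList (rs.take i) = Jsp fs i := by
    intro i hir
    apply le_antisymm
    · rw [Ideal.span_le]
      intro x hx
      obtain ⟨n, hn, hget2⟩ := List.mem_iff_getElem.mp hx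
      have hn' : n < i := by
        have := (List.length_take (i := i) (l := rs)) ▸ hn
        simp at this
        omega
      have hnr : n < rs.length := by rw [hlen]; omega
      have : (rs.take i)[n] = rs[n] := List.getElem_take
      rw [this, hget n hnr] at hget2
      rw [← hget2]
      exact g_mem_Jsp hn'
    · rw [Jsp, Ideal.span_le]
      rintro x ⟨n, rfl⟩
      apply Ideal.subset_span
      show fs (n : ℕ) ∈ {a | a ∈ rs.take i}
      have hnr : (n : ℕ) < rs.length := by rw [hlen]; exact lt_of_lt_of_le n.isLt hir
      have h3 : ((n : ℕ) : ℕ) < (rs.take i).length := by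
        rw [List.length_take]
        simp only [lt_min_iff]
        exact ⟨n.isLt, hnr⟩
      have h4 : (rs.take i)[(n : ℕ)] = rs[(n : ℕ)] := List.getElem_take
      have h5 : (rs.take i)[(n : ℕ)] = fs n := by rw [h4, hget _ hnr]
      rw [← h5]
      exact List.getElem_mem _
  -- assembling the regular sequence
  constructor
  · rw [RingTheory.Sequence.isWeaklyRegular_iff]
    intro i hi
    have hir : i < r := by rwa [hlen] at hi
    have hsm : (Ideal.ofList (rs.take i) • ⊤ : Submodule A A) = Jsp fs i := by
      rw [smul_eq_mul, Ideal.mul_top, hideal i hir.le]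
    intro x y hxy
    obtain ⟨px, rfl⟩ := Submodule.Quotient.mk_surjective _ x
    obtain ⟨py, rfl⟩ := Submodule.Quotient.mk_surjective _ y
    dsimp only at hxy
    rw [← Submodule.Quotient.mk_smul, ← Submodule.Quotient.mk_smul] at hxy
    rw [Submodule.Quotient.eq] at hxy ⊢
    rw [hsm] at hxy ⊢
    have : rs[i] • px - rs[i] • py = (px - py) * fs i := by
      rw [hget i hi]
      rw [smul_eq_mul, smul_eq_mul]
      ring
    rw [this] at hxy
    exact hwreg i hir _ hxy
  · intro heq
    have h1 : (1 : A) ∈ (⊤ : Submodule A A) := Submodule.mem_top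
    rw [heq] at h1
    rw [smul_eq_mul, Ideal.mul_top] at h1
    have h2 : rs.take r = rs := by
      rw [← hlen, List.take_length]
    rw [← h2, hideal r le_rfl] at h1
    exact one_not_mem_Jsp hconst h1
end

section
/- Let λ and μ be partitions and δ ≥ ℓ(λ) + ℓ(μ) an integer. Define the sets I_∧ = {λ_i - i + 1 : i ≥ 1} and I_∨ = {i - δ - μ_i : i ≥ 1} (treating λ_i = 0 for i > ℓ(λ) and μ_i = 0 for i > ℓ(μ)). Then every element of L = I_∧ \ I_∨ is strictly less than every element of M = I_∨ \ I_∧, i.e., max(L) < min(M). -/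
/-!
STATEMENT 19: Let `λ, μ` be partitions and `δ ≥ ℓ(λ) + ℓ(μ)`.  With
`I_∧ = {λᵢ - i + 1 : i ≥ 1}` and `I_∨ = {i - δ - μᵢ : i ≥ 1}` (where `λᵢ = 0` for
`i > ℓ(λ)` and `μᵢ = 0` for `i > ℓ(μ)`), every element of `L = I_∧ \ I_∨` is strictly
smaller than every element of `M = I_∨ \ I_∧`.
-/

theorem max_lt_min_of_weight_diagram
    (lam mu : ℕ → ℕ)
    (hlam : ∀ i j : ℕ, 1 ≤ i → i ≤ j → lam j ≤ lam i)
    (hmu : ∀ i j : ℕ, 1 ≤ i → i ≤ j → mu j ≤ mu i)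
    (r s : ℕ)
    (hr : ∀ i : ℕ, r < i → lam i = 0)
    (hs : ∀ i : ℕ, s < i → mu i = 0)
    (δ : ℕ) (hδ : r + s ≤ δ) :
    let Iw : Set ℤ := { z | ∃ i : ℕ, 1 ≤ i ∧ z = (lam i : ℤ) - i + 1 }
    let Iv : Set ℤ := { z | ∃ i : ℕ, 1 ≤ i ∧ z = (i : ℤ) - δ - mu i }
    ∀ x ∈ Iw \ Iv, ∀ y ∈ Iv \ Iw, x < y := by
  intro Iw Iv x hx y hy
  -- every integer z ≤ -r is in Iw
  have hIw : ∀ z : ℤ, z ≤ -(r : ℤ) → z ∈ Iw := by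
    intro z hz
    refine ⟨(1 - z).toNat, ?_, ?_⟩
    · omega
    · have h1 : ((1 - z).toNat : ℤ) = 1 - z := Int.toNat_of_nonneg (by omega)
      have h2 : lam (1 - z).toNat = 0 := hr _ (by omega)
      rw [h2]; push_cast; omega
  -- every integer z ≥ s + 1 - δ is in Iv
  have hIv : ∀ z : ℤ, (s : ℤ) + 1 - δ ≤ z → z ∈ Iv := by
    intro z hz
    refine ⟨(z + δ).toNat, ?_, ?_⟩
    · omega
    · have h1 : ((z + δ).toNat : ℤ) = z + δ := Int.toNat_of_nonneg (by omega)
      have h2 : mu (z + δ).toNat = 0 := hs _ (by omega)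
      rw [h2]; push_cast; omega
  have hx2 : x < (s : ℤ) + 1 - δ := by
    by_contra h
    exact hx.2 (hIv x (by omega))
  have hy2 : -(r : ℤ) < y := by
    by_contra h
    exact hy.2 (hIw y (by omega))
  omega
end
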